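/- arXiv:1702.05864 — 4 statements merged into one kernel-verified Lean document; each statement's English description precedes it below -/
import Mathlib

section
/- Let p ≥ 2 and b ∈ ℝ with b < 1 - 1/p. There exists a constant C > 0, depending only on p and b, such that for every Lebesgue measurable function f : ℝ → ℝ one has ∫_{1/10}^∞ ( t^{b-1} ∫_1^t |f(s)| ds )^p dt ≤ C ∫_0^∞ ( t^b |f(t)| )^p dt, where for t < 1 the inner integral ∫_1^t |f| is interpreted as the (nonnegative) integral of |f| over the interval between t and 1. -/
open MeasureTheory Set intervalIntegral
open scoped ENNReal

lemma hardy_swap_aux (H φ : ℝ → ℝ≥0∞) (hH : Measurable H) (hφ : Measurable φ) :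
    ∫⁻ t in Ioi (1:ℝ), φ t * ∫⁻ s in Ioc (1:ℝ) t, H s
      = ∫⁻ s in Ioi (1:ℝ), H s * ∫⁻ t in Ici s, φ t := by
  have key : ∀ t : ℝ, ∫⁻ s in Ioc (1:ℝ) t, H s
      = ∫⁻ s in Ioi (1:ℝ), (Iic t).indicator H s := by
    intro t
    rw [lintegral_indicator measurableSet_Iic, Measure.restrict_restrict measurableSet_Iic,
      inter_comm, Ioi_inter_Iic]
  have hm : Measurable (Function.uncurry fun t s => φ t * (Iic t).indicator H s) := by
    have : (Function.uncurry fun t s => φ t * (Iic t).indicator H s)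
        = fun z : ℝ × ℝ => φ z.1 * ({q : ℝ × ℝ | q.2 ≤ q.1}.indicator (fun q => H q.2) z) := by
      ext z
      simp only [Function.uncurry, Set.indicator_apply, mem_Iic, mem_setOf_eq]
    rw [this]
    exact (hφ.comp measurable_fst).mul
      ((hH.comp measurable_snd).indicator (measurableSet_le measurable_snd measurable_fst))
  calc ∫⁻ t in Ioi (1:ℝ), φ t * ∫⁻ s in Ioc (1:ℝ) t, H s
      = ∫⁻ t in Ioi (1:ℝ), ∫⁻ s in Ioi (1:ℝ), φ t * (Iic t).indicator H s := by
        refine lintegral_congr fun t => ?_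
        rw [key t, lintegral_const_mul _ (hH.indicator measurableSet_Iic)]
    _ = ∫⁻ s in Ioi (1:ℝ), ∫⁻ t in Ioi (1:ℝ), φ t * (Iic t).indicator H s :=
        lintegral_lintegral_swap hm.aemeasurable
    _ = ∫⁻ s in Ioi (1:ℝ), H s * ∫⁻ t in Ici s, φ t := by
        refine setLIntegral_congr_fun_ae measurableSet_Ioi (ae_of_all _ fun s hs => ?_)
        have h1 : ∀ t : ℝ, φ t * (Iic t).indicator H s
            = (Ici s).indicator (fun t => φ t * H s) t := by
          intro t
          by_cases h : s ≤ t <;> simp [Set.indicator_apply, h]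
        simp_rw [h1]
        rw [lintegral_indicator measurableSet_Ici, Measure.restrict_restrict measurableSet_Ici]
        have h2 : Ici s ∩ Ioi (1:ℝ) = Ici s :=
          inter_eq_left.2 fun x hx => mem_Ioi.2 (lt_of_lt_of_le hs hx)
        rw [h2, lintegral_mul_const _ hφ, mul_comm]

lemma hardy_holder_aux {p q : ℝ} (r : ℝ) (hpq : p.HolderConjugate q) (g : ℝ → ℝ≥0∞)
    (hg : Measurable g) {S : Set ℝ} (hS : MeasurableSet S) (hS0 : S ⊆ Ioi 0) :
    ∫⁻ s in S, g s ≤ (∫⁻ s in S, ENNReal.ofReal (s ^ (-(r * q)))) ^ (1/q)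
      * (∫⁻ s in S, ENNReal.ofReal (s ^ (r * p)) * g s ^ p) ^ (1/p) := by
  have hmw : ∀ c : ℝ, Measurable fun s : ℝ => ENNReal.ofReal (s ^ c) := fun c =>
    (measurable_id.pow_const c).ennreal_ofReal
  have h1 : ∫⁻ s in S, g s
      = ∫⁻ s in S, (fun s => ENNReal.ofReal (s ^ (-r))) s
          * (fun s => ENNReal.ofReal (s ^ r) * g s) s := by
    refine setLIntegral_congr_fun_ae hS (ae_of_all _ fun s hs => ?_)
    have hs0 : (0:ℝ) < s := hS0 hs
    rw [← mul_assoc, ← ENNReal.ofReal_mul (Real.rpow_nonneg hs0.le _),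
      ← Real.rpow_add hs0, neg_add_cancel, Real.rpow_zero, ENNReal.ofReal_one, one_mul]
  rw [h1]
  have := ENNReal.lintegral_mul_le_Lp_mul_Lq (volume.restrict S) hpq.symm
    ((hmw (-r)).aemeasurable) (((hmw r).mul hg).aemeasurable)
  simp only [Pi.mul_apply] at this
  refine this.trans (le_of_eq ?_)
  congr 1
  · congr 1
    refine setLIntegral_congr_fun_ae hS (ae_of_all _ fun s hs => ?_)
    have hs0 : (0:ℝ) < s := hS0 hs
    rw [ENNReal.ofReal_rpow_of_pos (Real.rpow_pos_of_pos hs0 _), ← Real.rpow_mul hs0.le,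
      neg_mul]
  · congr 1
    refine setLIntegral_congr_fun_ae hS (ae_of_all _ fun s hs => ?_)
    have hs0 : (0:ℝ) < s := hS0 hs
    rw [ENNReal.mul_rpow_of_nonneg _ _ hpq.nonneg]
    congr 1
    rw [ENNReal.ofReal_rpow_of_pos (Real.rpow_pos_of_pos hs0 _), ← Real.rpow_mul hs0.le]

lemma hardy_weight_Ioc {t c : ℝ} (ht : 1 ≤ t) (hc : -1 < c) :
    ∫⁻ s in Ioc (1:ℝ) t, ENNReal.ofReal (s ^ c) ≤ ENNReal.ofReal (t ^ (c+1) / (c+1)) := by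
  have hint : IntegrableOn (fun s : ℝ => s ^ c) (Ioc 1 t) := (intervalIntegrable_rpow' hc).1
  rw [← ofReal_integral_eq_lintegral_ofReal hint
    ((ae_restrict_mem measurableSet_Ioc).mono fun s hs =>
      Real.rpow_nonneg (by linarith [hs.1] : (0:ℝ) ≤ s) _)]
  have h1 : ∫ s in Ioc (1:ℝ) t, s ^ c = (t ^ (c+1) - 1) / (c+1) := by
    rw [← intervalIntegral.integral_of_le ht, integral_rpow (Or.inl hc)]
    norm_num
  rw [h1]
  apply ENNReal.ofReal_le_ofReal
  apply div_le_div_of_nonneg_right ?_ (by linarith)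
  linarith

lemma hardy_tail_Ici {s A : ℝ} (hs : 0 < s) (hA : A < -1) :
    ∫⁻ t in Ici s, ENNReal.ofReal (t ^ A) = ENNReal.ofReal (s ^ (A+1) * (-(A+1))⁻¹) := by
  rw [← setLIntegral_congr Ioi_ae_eq_Ici,
    ← ofReal_integral_eq_lintegral_ofReal (integrableOn_Ioi_rpow_of_lt hA hs)
      ((ae_restrict_mem measurableSet_Ioi).mono fun t htm =>
        Real.rpow_nonneg (le_of_lt (hs.trans htm)) _),
    integral_Ioi_rpow_of_lt hA hs]
  congr 1
  rw [div_eq_mul_inv, neg_mul_comm]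
  congr 1
  rw [← inv_neg]

lemma hardy_pow_combine {p q : ℝ} (hpq : p.HolderConjugate q) (a W J : ℝ≥0∞) :
    (a * (W ^ (1/q) * J ^ (1/p))) ^ p = a ^ p * (W ^ (p-1) * J) := by
  have hp0 : p ≠ 0 := hpq.pos.ne'
  have h1 : 1/p * p = 1 := by field_simp
  have h2 : 1/q * p = p - 1 := by
    have h := hpq.inv_add_inv_eq_one
    have hq0 : q ≠ 0 := hpq.symm.pos.ne'
    field_simp at h ⊢
    nlinarith [h]
  rw [ENNReal.mul_rpow_of_nonneg _ _ hpq.nonneg, ENNReal.mul_rpow_of_nonneg _ _ hpq.nonneg,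
    ← ENNReal.rpow_mul W, ← ENNReal.rpow_mul J, h1, h2, ENNReal.rpow_one]

/-- Hardy's inequality, polynomial weights, case `b < 1 - 1/p`.
For `t < 1` the inner integral `∫_1^t |f|` is interpreted as the nonnegative
integral of `|f|` over the interval between `t` and `1` (here `uIoc 1 t`). -/
theorem hardy_polynomial_lower (p b : ℝ) (hp : 2 ≤ p) (hb : b < 1 - 1 / p) :
    ∃ C : ℝ, 0 < C ∧ ∀ f : ℝ → ℝ, Measurable f →
      (∫⁻ t in Ioi (1 / 10 : ℝ),
          (ENNReal.ofReal (t ^ (b - 1)) * ∫⁻ s in uIoc (1 : ℝ) t, ENNReal.ofReal |f s|) ^ p)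
        ≤ ENNReal.ofReal C *
          ∫⁻ t in Ioi (0 : ℝ), (ENNReal.ofReal (t ^ b * |f t|)) ^ p := by
  have hp1 : (1:ℝ) < p := by linarith
  have hp0 : (0:ℝ) < p := by linarith
  have hpne : p ≠ 0 := hp0.ne'
  have hpm1 : p - 1 ≠ 0 := by intro h; rw [sub_eq_zero] at h; linarith
  have hpq : p.HolderConjugate (p / (p - 1)) := (Real.holderConjugate_iff_eq_conjExponent hp1).2 rfl
  set q : ℝ := p / (p - 1) with hqdef
  have hq0 : 0 < q := hpq.symm.pos
  have hbp : (b - 1) * p < -1 := by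
    have h1 : b * p < (1 - 1 / p) * p := mul_lt_mul_of_pos_right hb hp0
    have h2 : (1 - 1 / p) * p = p - 1 := by field_simp
    nlinarith
  set ε : ℝ := min (1/2) ((-1 - (b - 1) * p) / (2 * (p - 1))) with hεdef
  have hεpos : 0 < ε := lt_min (by norm_num) (div_pos (by linarith) (by linarith))
  have hεA : ε * (p - 1) < -1 - (b - 1) * p := by
    have h3 : ε ≤ (-1 - (b - 1) * p) / (2 * (p - 1)) := min_le_right _ _
    have h4 := mul_le_mul_of_nonneg_right h3 (by linarith : (0:ℝ) ≤ p - 1)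
    have h5 : (-1 - (b - 1) * p) / (2 * (p - 1)) * (p - 1) = (-1 - (b - 1) * p) / 2 := by
      field_simp
    rw [h5] at h4
    linarith
  set r : ℝ := (1 - ε) * (p - 1) / p with hrdef
  have hrq : r * q = 1 - ε := by
    rw [hrdef, hqdef]
    field_simp
  have hrp : r * p = (1 - ε) * (p - 1) := by
    rw [hrdef]
    field_simp
  set A : ℝ := (b - 1) * p + ε * (p - 1) with hAdef
  have hA : A < -1 := by rw [hAdef]; linarith
  have hkey : r * p + (A + 1) = b * p := by rw [hrp, hAdef]; ring
  set c2 : ℝ := (1/ε) ^ (p - 1) with hc2def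
  set c3 : ℝ := (-(A + 1))⁻¹ with hc3def
  have hc2 : 0 < c2 := Real.rpow_pos_of_pos (by positivity) _
  have hc3 : 0 < c3 := inv_pos.2 (by linarith)
  set M1 : ℝ := max ((1/10:ℝ) ^ (b - 1)) 1 with hM1def
  set M2 : ℝ := max ((1/10:ℝ) ^ (-(b * q))) 1 with hM2def
  have hM1 : 0 < M1 := lt_of_lt_of_le one_pos (le_max_right _ _)
  have hM2 : 0 < M2 := lt_of_lt_of_le one_pos (le_max_right _ _)
  set K1 : ℝ := M2 * (9/10) with hK1def
  have hK1 : 0 < K1 := by positivity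
  have hD : 0 < M1 ^ p * K1 ^ (p-1) :=
    mul_pos (Real.rpow_pos_of_pos hM1 _) (Real.rpow_pos_of_pos hK1 _)
  refine ⟨M1 ^ p * K1 ^ (p-1) * (9/10) + c2 * c3, by positivity, fun f hf => ?_⟩
  have hg : Measurable fun s : ℝ => ENNReal.ofReal |f s| := hf.abs.ennreal_ofReal
  set R : ℝ≥0∞ := ∫⁻ t in Ioi (0:ℝ), (ENNReal.ofReal (t ^ b * |f t|)) ^ p with hRdef
  have hpt0 : ∀ s : ℝ, 0 < s → ENNReal.ofReal (s ^ (b * p)) * ENNReal.ofReal |f s| ^ p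
      = ENNReal.ofReal (s ^ b * |f s|) ^ p := by
    intro s hs
    rw [ENNReal.ofReal_mul (Real.rpow_nonneg hs.le _), ENNReal.mul_rpow_of_nonneg _ _ hp0.le,
      ENNReal.ofReal_rpow_of_pos (Real.rpow_pos_of_pos hs _), ← Real.rpow_mul hs.le]
  have hRle : ∀ S : Set ℝ, MeasurableSet S → S ⊆ Ioi 0 →
      ∫⁻ s in S, ENNReal.ofReal (s ^ (b * p)) * ENNReal.ofReal |f s| ^ p ≤ R := by
    intro S hSm hS0
    calc ∫⁻ s in S, ENNReal.ofReal (s ^ (b * p)) * ENNReal.ofReal |f s| ^ p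
        = ∫⁻ s in S, ENNReal.ofReal (s ^ b * |f s|) ^ p :=
          setLIntegral_congr_fun_ae hSm (ae_of_all _ fun s hs => hpt0 s (hS0 hs))
      _ ≤ R := lintegral_mono_set hS0
  have hsplit : Ioi (1/10:ℝ) = Ioc (1/10:ℝ) 1 ∪ Ioi (1:ℝ) :=
    (Ioc_union_Ioi_eq_Ioi (by norm_num)).symm
  rw [hsplit, lintegral_union measurableSet_Ioi Ioc_disjoint_Ioi_same]
  -- Part 1
  have hpart1 : (∫⁻ t in Ioc (1/10:ℝ) 1,
      (ENNReal.ofReal (t ^ (b-1)) * ∫⁻ s in uIoc (1:ℝ) t, ENNReal.ofReal |f s|) ^ p)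
      ≤ ENNReal.ofReal (M1 ^ p * K1 ^ (p-1) * (9/10)) * R := by
    have hW1 : (∫⁻ s in Ioc (1/10:ℝ) 1, ENNReal.ofReal (s ^ (-(b * q))))
        ≤ ENNReal.ofReal K1 := by
      calc ∫⁻ s in Ioc (1/10:ℝ) 1, ENNReal.ofReal (s ^ (-(b * q)))
          ≤ ∫⁻ _ in Ioc (1/10:ℝ) 1, ENNReal.ofReal M2 := by
            refine setLIntegral_mono measurable_const fun s hs => ?_
            refine ENNReal.ofReal_le_ofReal ?_
            rcases le_or_gt (-(b*q)) 0 with h | h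
            · exact le_trans (Real.rpow_le_rpow_of_nonpos (by norm_num) hs.1.le h)
                (le_max_left _ _)
            · exact le_trans (Real.rpow_le_one (by linarith [hs.1]) hs.2 h.le) (le_max_right _ _)
        _ = ENNReal.ofReal K1 := by
            rw [setLIntegral_const, Real.volume_Ioc, ← ENNReal.ofReal_mul hM2.le, hK1def]
            norm_num
    have hJ1 : (∫⁻ s in Ioc (1/10:ℝ) 1, ENNReal.ofReal (s ^ (b * p))
        * ENNReal.ofReal |f s| ^ p) ≤ R :=
      hRle _ measurableSet_Ioc (fun x hx => lt_trans (by norm_num) hx.1)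
    calc (∫⁻ t in Ioc (1/10:ℝ) 1,
        (ENNReal.ofReal (t ^ (b-1)) * ∫⁻ s in uIoc (1:ℝ) t, ENNReal.ofReal |f s|) ^ p)
        ≤ ∫⁻ _ in Ioc (1/10:ℝ) 1, ENNReal.ofReal (M1 ^ p * K1 ^ (p-1)) * R := by
          refine setLIntegral_mono measurable_const fun t ht => ?_
          have ht0 : (0:ℝ) < t := lt_trans (by norm_num) ht.1
          have hIle : (∫⁻ s in uIoc (1:ℝ) t, ENNReal.ofReal |f s|)
              ≤ ∫⁻ s in Ioc (1/10:ℝ) 1, ENNReal.ofReal |f s| := by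
            rw [uIoc_of_ge ht.2]
            exact lintegral_mono_set (Ioc_subset_Ioc_left ht.1.le)
          have hhold := hardy_holder_aux (S := Ioc (1/10:ℝ) 1) b hpq (fun s => ENNReal.ofReal |f s|) hg
            measurableSet_Ioc (fun x hx => lt_trans (by norm_num : (0:ℝ) < 1/10) hx.1)
          have htb : ENNReal.ofReal (t ^ (b-1)) ≤ ENNReal.ofReal M1 := by
            refine ENNReal.ofReal_le_ofReal ?_
            rcases le_or_gt (b-1) 0 with h | h
            · exact le_trans (Real.rpow_le_rpow_of_nonpos (by norm_num) ht.1.le h)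
                (le_max_left _ _)
            · exact le_trans (Real.rpow_le_one ht0.le ht.2 h.le) (le_max_right _ _)
          calc (ENNReal.ofReal (t ^ (b-1)) * ∫⁻ s in uIoc (1:ℝ) t, ENNReal.ofReal |f s|) ^ p
              ≤ (ENNReal.ofReal M1 * ((ENNReal.ofReal K1) ^ (1/q) * R ^ (1/p))) ^ p := by
                refine ENNReal.rpow_le_rpow (mul_le_mul' htb (le_trans hIle (le_trans hhold ?_)))
                  hp0.le
                exact mul_le_mul' (ENNReal.rpow_le_rpow hW1 (one_div_nonneg.mpr hq0.le))
                  (ENNReal.rpow_le_rpow hJ1 (one_div_nonneg.mpr hp0.le))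
            _ = ENNReal.ofReal M1 ^ p * ((ENNReal.ofReal K1) ^ (p-1) * R) :=
                hardy_pow_combine hpq _ _ _
            _ = ENNReal.ofReal (M1 ^ p * K1 ^ (p-1)) * R := by
                rw [ENNReal.ofReal_rpow_of_pos hM1, ENNReal.ofReal_rpow_of_pos hK1,
                  ENNReal.ofReal_mul (Real.rpow_nonneg hM1.le _), mul_assoc]
      _ = ENNReal.ofReal (M1 ^ p * K1 ^ (p-1)) * R * volume (Ioc (1/10:ℝ) 1) :=
            setLIntegral_const _ _
      _ = ENNReal.ofReal (M1 ^ p * K1 ^ (p-1) * (9/10)) * R := by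
            rw [Real.volume_Ioc, show ((1:ℝ) - 1/10) = 9/10 by norm_num, mul_right_comm,
              ← ENNReal.ofReal_mul hD.le]
  -- Part 2
  have hH : Measurable fun s : ℝ => ENNReal.ofReal (s ^ (r * p)) * ENNReal.ofReal |f s| ^ p :=
    ((measurable_id.pow_const _).ennreal_ofReal).mul (hg.pow_const p)
  have hφ : Measurable fun t : ℝ => ENNReal.ofReal (t ^ A) :=
    (measurable_id.pow_const _).ennreal_ofReal
  set J : ℝ → ℝ≥0∞ :=
    fun t => ∫⁻ s in Ioc (1:ℝ) t, ENNReal.ofReal (s ^ (r*p)) * ENNReal.ofReal |f s| ^ p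
    with hJdef
  have hJmono : Monotone J := fun a b hab => lintegral_mono_set (Ioc_subset_Ioc_right hab)
  have hJm : Measurable J := hJmono.measurable
  have hpart2 : (∫⁻ t in Ioi (1:ℝ),
      (ENNReal.ofReal (t ^ (b-1)) * ∫⁻ s in uIoc (1:ℝ) t, ENNReal.ofReal |f s|) ^ p)
      ≤ ENNReal.ofReal (c2 * c3) * R := by
    have hstep1 : (∫⁻ t in Ioi (1:ℝ),
        (ENNReal.ofReal (t ^ (b-1)) * ∫⁻ s in uIoc (1:ℝ) t, ENNReal.ofReal |f s|) ^ p)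
        ≤ ∫⁻ t in Ioi (1:ℝ), ENNReal.ofReal c2 * (ENNReal.ofReal (t ^ A) * J t) := by
      refine setLIntegral_mono (measurable_const.mul (hφ.mul hJm)) fun t ht => ?_
      have ht1 : (1:ℝ) < t := ht
      have ht0 : (0:ℝ) < t := lt_trans one_pos ht1
      rw [uIoc_of_le ht1.le]
      have hhold := hardy_holder_aux (S := Ioc (1:ℝ) t) r hpq (fun s => ENNReal.ofReal |f s|) hg
        measurableSet_Ioc (fun x hx => lt_trans one_pos hx.1)
      have hW : (∫⁻ s in Ioc (1:ℝ) t, ENNReal.ofReal (s ^ (-(r*q))))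
          ≤ ENNReal.ofReal (t ^ ε / ε) := by
        have h := hardy_weight_Ioc (t := t) (c := -(r*q)) ht1.le (by rw [hrq]; linarith)
        rwa [show -(r*q) + 1 = ε by rw [hrq]; ring] at h
      calc (ENNReal.ofReal (t ^ (b-1)) * ∫⁻ s in Ioc (1:ℝ) t, ENNReal.ofReal |f s|) ^ p
          ≤ (ENNReal.ofReal (t ^ (b-1)) * ((ENNReal.ofReal (t ^ ε / ε)) ^ (1/q)
              * (J t) ^ (1/p))) ^ p := by
            refine ENNReal.rpow_le_rpow (mul_le_mul' le_rfl (le_trans hhold ?_)) hp0.le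
            exact mul_le_mul' (ENNReal.rpow_le_rpow hW (one_div_nonneg.mpr hq0.le)) le_rfl
        _ = ENNReal.ofReal (t ^ (b-1)) ^ p * ((ENNReal.ofReal (t ^ ε / ε)) ^ (p-1) * J t) :=
            hardy_pow_combine hpq _ _ _
        _ = ENNReal.ofReal c2 * (ENNReal.ofReal (t ^ A) * J t) := by
            rw [ENNReal.ofReal_rpow_of_pos (Real.rpow_pos_of_pos ht0 _),
              ENNReal.ofReal_rpow_of_pos (by positivity), ← Real.rpow_mul ht0.le,
              ← mul_assoc, ← mul_assoc, ← ENNReal.ofReal_mul (Real.rpow_nonneg ht0.le _)]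
            congr 2
            rw [div_eq_mul_one_div, Real.mul_rpow (Real.rpow_nonneg ht0.le _) (by positivity),
              ← Real.rpow_mul ht0.le, ← mul_assoc, ← Real.rpow_add ht0, hc2def, hAdef,
              mul_comm]
            exact ENNReal.ofReal_mul (Real.rpow_nonneg (by positivity) _)
    have hstep2 : (∫⁻ t in Ioi (1:ℝ), ENNReal.ofReal (t ^ A) * J t)
        ≤ ENNReal.ofReal c3 * R := by
      rw [hJdef, hardy_swap_aux _ _ hH hφ]
      have hptw : ∀ s ∈ Ioi (1:ℝ),
          (ENNReal.ofReal (s^(r*p)) * ENNReal.ofReal |f s| ^ p)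
            * ∫⁻ t in Ici s, ENNReal.ofReal (t^A)
          = ENNReal.ofReal c3 * (ENNReal.ofReal (s^(b*p)) * ENNReal.ofReal |f s| ^ p) := by
        intro s hs
        have hs0 : (0:ℝ) < s := lt_trans one_pos hs
        have hsb : ENNReal.ofReal (s^(b*p))
            = ENNReal.ofReal (s^(r*p)) * ENNReal.ofReal (s^(A+1)) := by
          rw [← ENNReal.ofReal_mul (Real.rpow_nonneg hs0.le _), ← Real.rpow_add hs0, hkey]
        rw [hardy_tail_Ici hs0 hA, ENNReal.ofReal_mul (Real.rpow_nonneg hs0.le _), hsb, hc3def]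
        ring
      rw [setLIntegral_congr_fun_ae measurableSet_Ioi (ae_of_all _ hptw)]
      have hm : Measurable fun x : ℝ => ENNReal.ofReal (x ^ (b * p)) * ENNReal.ofReal |f x| ^ p :=
        ((measurable_id.pow_const _).ennreal_ofReal).mul (hg.pow_const p)
      rw [lintegral_const_mul _ hm]
      exact mul_le_mul' le_rfl (hRle _ measurableSet_Ioi (fun x hx => mem_Ioi.2 (lt_trans one_pos hx)))
    calc (∫⁻ t in Ioi (1:ℝ),
        (ENNReal.ofReal (t ^ (b-1)) * ∫⁻ s in uIoc (1:ℝ) t, ENNReal.ofReal |f s|) ^ p)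
        ≤ ∫⁻ t in Ioi (1:ℝ), ENNReal.ofReal c2 * (ENNReal.ofReal (t ^ A) * J t) := hstep1
      _ = ENNReal.ofReal c2 * ∫⁻ t in Ioi (1:ℝ), ENNReal.ofReal (t ^ A) * J t :=
          lintegral_const_mul _ (hφ.mul hJm)
      _ ≤ ENNReal.ofReal c2 * (ENNReal.ofReal c3 * R) := mul_le_mul' le_rfl hstep2
      _ = ENNReal.ofReal (c2 * c3) * R := by rw [ENNReal.ofReal_mul hc2.le, mul_assoc]
  calc (∫⁻ t in Ioc (1/10:ℝ) 1,
      (ENNReal.ofReal (t ^ (b-1)) * ∫⁻ s in uIoc (1:ℝ) t, ENNReal.ofReal |f s|) ^ p)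
      + ∫⁻ t in Ioi (1:ℝ),
        (ENNReal.ofReal (t ^ (b-1)) * ∫⁻ s in uIoc (1:ℝ) t, ENNReal.ofReal |f s|) ^ p
      ≤ ENNReal.ofReal (M1 ^ p * K1 ^ (p-1) * (9/10)) * R + ENNReal.ofReal (c2 * c3) * R :=
        add_le_add hpart1 hpart2
    _ = ENNReal.ofReal (M1 ^ p * K1 ^ (p-1) * (9/10) + c2 * c3) * R := by
        rw [ENNReal.ofReal_add (by positivity) (by positivity), add_mul]
end

section
/- Let p ≥ 2, b ∈ ℝ, ϑ ≥ 0, and μ₀ > 0. There exists a constant C > 0, depending only on μ₀, p, b, and ϑ, such that for every μ ≤ -μ₀ and every Lebesgue measurable f : ℝ → ℝ one has |μ|^{p(1+ϑ)} ∫_{1/10}^∞ ( e^{μ t} t^b ∫_1^t e^{-μ s} |f(s)| (t-s)^ϑ ds )^p dt ≤ C ∫_0^∞ ( |f(t)| t^b )^p dt, where for t < 1 the inner integral is interpreted as 0. -/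
open MeasureTheory Set
open scoped ENNReal

private lemma hardy_aux_pow_le_exp (n : ℕ) {x : ℝ} (hx : 0 ≤ x) :
    x ^ n ≤ n.factorial * Real.exp x := by
  have h := Real.sum_le_exp_of_nonneg hx (n + 1)
  have h2 : x ^ n / n.factorial ≤ Real.exp x := by
    refine le_trans ?_ h
    exact Finset.single_le_sum (f := fun i => x ^ i / i.factorial)
      (fun i _ => by positivity) (Finset.self_mem_range_succ n)
  have hfac : (0:ℝ) < n.factorial := by positivity
  rw [div_le_iff₀ hfac] at h2
  linarith [h2]

private lemma hardy_aux_core (b μ₀ : ℝ) (hμ₀ : 0 < μ₀) :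
    ∃ C₁ : ℝ, 0 < C₁ ∧ ∀ ν : ℝ, μ₀ ≤ ν → ∀ s t : ℝ, 1 ≤ s → s ≤ t →
      Real.exp (-(ν * (t - s))) * t ^ b ≤ C₁ * Real.exp (-(ν / 2 * (t - s))) * s ^ b := by
  set n := ⌈|b|⌉₊ with hn
  refine ⟨(2 / μ₀) ^ n * n.factorial * Real.exp (μ₀ / 2), by positivity, ?_⟩
  intro ν hν s t hs hst
  set u := t - s with hu
  have hu0 : 0 ≤ u := by simp [hu]; linarith
  have hs0 : (0:ℝ) < s := by linarith
  have ht0 : (0:ℝ) < t := by linarith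
  have hA : t ^ b ≤ (1 + u) ^ n * s ^ b := by
    have h1u : (1:ℝ) ≤ 1 + u := by linarith
    have hbn : |b| ≤ (n : ℝ) := Nat.le_ceil _
    have hmid : t ^ b ≤ (1 + u) ^ |b| * s ^ b := by
      rcases le_or_gt 0 b with hb | hb
      · have hts : t ≤ (1 + u) * s := by nlinarith
        calc t ^ b ≤ ((1 + u) * s) ^ b := Real.rpow_le_rpow ht0.le hts hb
          _ = (1 + u) ^ b * s ^ b := Real.mul_rpow (by linarith) hs0.le
          _ = (1 + u) ^ |b| * s ^ b := by rw [abs_of_nonneg hb]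
      · have h1 : t ^ b ≤ s ^ b := Real.rpow_le_rpow_of_nonpos hs0 hst hb.le
        have h2 : (1:ℝ) ≤ (1 + u) ^ |b| := Real.one_le_rpow h1u (abs_nonneg b)
        nlinarith [Real.rpow_pos_of_pos hs0 b]
    have hstep : (1 + u) ^ |b| ≤ (1 + u) ^ n := by
      calc (1 + u) ^ |b| ≤ (1 + u) ^ (n : ℝ) :=
            Real.rpow_le_rpow_of_exponent_le h1u hbn
        _ = (1 + u) ^ n := Real.rpow_natCast _ n
    have hsb : (0:ℝ) ≤ s ^ b := (Real.rpow_pos_of_pos hs0 b).le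
    nlinarith
  have hB : (1 + u) ^ n ≤ (2 / μ₀) ^ n * n.factorial * Real.exp (μ₀ / 2) *
      Real.exp (μ₀ / 2 * u) := by
    have hx : (0:ℝ) ≤ μ₀ * (1 + u) / 2 := by positivity
    have h := hardy_aux_pow_le_exp n hx
    have hexp : Real.exp (μ₀ * (1 + u) / 2) = Real.exp (μ₀ / 2) * Real.exp (μ₀ / 2 * u) := by
      rw [← Real.exp_add]; ring_nf
    have hpow : (μ₀ * (1 + u) / 2) ^ n = (μ₀ / 2) ^ n * (1 + u) ^ n := by
      rw [← mul_pow]; ring_nf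
    rw [hpow, hexp] at h
    have hkey : (1 + u) ^ n = (2 / μ₀) ^ n * ((μ₀ / 2) ^ n * (1 + u) ^ n) := by
      rw [← mul_assoc, ← mul_pow]; field_simp; simp
    rw [hkey]
    have h2 : (0:ℝ) < (2 / μ₀) ^ n := by positivity
    calc (2 / μ₀) ^ n * ((μ₀ / 2) ^ n * (1 + u) ^ n)
        ≤ (2 / μ₀) ^ n * (n.factorial * (Real.exp (μ₀ / 2) * Real.exp (μ₀ / 2 * u))) :=
          mul_le_mul_of_nonneg_left h h2.le
      _ = (2 / μ₀) ^ n * n.factorial * Real.exp (μ₀ / 2) * Real.exp (μ₀ / 2 * u) := by ring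
  have hC : Real.exp (-(ν * u)) * Real.exp (μ₀ / 2 * u) ≤ Real.exp (-(ν / 2 * u)) := by
    rw [← Real.exp_add]
    apply Real.exp_le_exp.2
    nlinarith
  have hsb : (0:ℝ) ≤ s ^ b := (Real.rpow_pos_of_pos hs0 b).le
  have he1 : (0:ℝ) < Real.exp (-(ν * u)) := Real.exp_pos _
  calc Real.exp (-(ν * u)) * t ^ b
      ≤ Real.exp (-(ν * u)) * ((1 + u) ^ n * s ^ b) :=
        mul_le_mul_of_nonneg_left hA he1.le
    _ ≤ Real.exp (-(ν * u)) * ((2 / μ₀) ^ n * n.factorial * Real.exp (μ₀ / 2)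
          * Real.exp (μ₀ / 2 * u) * s ^ b) := by
        apply mul_le_mul_of_nonneg_left _ he1.le
        exact mul_le_mul_of_nonneg_right hB hsb
    _ = ((2 / μ₀) ^ n * n.factorial * Real.exp (μ₀ / 2)) *
          (Real.exp (-(ν * u)) * Real.exp (μ₀ / 2 * u)) * s ^ b := by ring
    _ ≤ ((2 / μ₀) ^ n * n.factorial * Real.exp (μ₀ / 2)) *
          Real.exp (-(ν / 2 * u)) * s ^ b := by
        apply mul_le_mul_of_nonneg_right _ hsb
        apply mul_le_mul_of_nonneg_left hC (by positivity)

private lemma hardy_aux_holder {α : Type*} [MeasurableSpace α] (ρ : Measure α) {p : ℝ}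
    (hp : 1 < p) {K G : α → ℝ≥0∞} (hK : AEMeasurable K ρ) (hG : AEMeasurable G ρ) :
    (∫⁻ x, K x * G x ∂ρ) ^ p ≤ (∫⁻ x, K x ∂ρ) ^ (p - 1) * ∫⁻ x, K x * G x ^ p ∂ρ := by
  have hp0 : (0:ℝ) < p := by linarith
  set q := Real.conjExponent p with hqdef
  have hpq : p.HolderConjugate q := Real.HolderConjugate.conjExponent hp
  have hq0 : (0:ℝ) < q := hpq.symm.pos
  have hinv : 1 / p + 1 / q = 1 := by
    have := hpq.inv_add_inv_eq_inv; simp only [inv_one] at this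
    rw [one_div, one_div]; exact this
  have hqp : 1 / q * p = p - 1 := by
    have : 1 / q = 1 - 1 / p := by linarith
    rw [this]; field_simp
  have hmeas1 : AEMeasurable (fun x => K x ^ (1 / p) * G x) ρ :=
    (hK.pow_const _).mul hG
  have hmeas2 : AEMeasurable (fun x => K x ^ (1 / q)) ρ := hK.pow_const _
  have h := ENNReal.lintegral_mul_le_Lp_mul_Lq ρ hpq hmeas1 hmeas2
  have heq : ∀ x, (fun x => K x ^ (1 / p) * G x) x * (fun x => K x ^ (1 / q)) x
      = K x * G x := by
    intro x
    simp only
    rw [mul_comm (K x ^ (1/p)) (G x), mul_assoc,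
      ← ENNReal.rpow_add_of_nonneg (x := K x) (1/p) (1/q) (by positivity : (0:ℝ) ≤ 1/p)
        (by positivity : (0:ℝ) ≤ 1/q), hinv, ENNReal.rpow_one, mul_comm]
  have heq2 : ∀ x, ((fun x => K x ^ (1 / p) * G x) x) ^ p = K x * G x ^ p := by
    intro x
    simp only
    rw [ENNReal.mul_rpow_of_nonneg _ _ hp0.le, ← ENNReal.rpow_mul,
      one_div_mul_cancel hp0.ne', ENNReal.rpow_one]
  have heq3 : ∀ x, ((fun x => K x ^ (1 / q)) x) ^ q = K x := by
    intro x
    simp only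
    rw [← ENNReal.rpow_mul, one_div_mul_cancel hq0.ne', ENNReal.rpow_one]
  simp only [Pi.mul_apply] at h
  rw [show (fun x => K x * G x) = fun x => (K x ^ (1/p) * G x) * (K x ^ (1/q)) from
    funext fun x => (heq x).symm]
  calc (∫⁻ x, K x ^ (1/p) * G x * K x ^ (1/q) ∂ρ) ^ p
      ≤ ((∫⁻ x, (K x ^ (1/p) * G x) ^ p ∂ρ) ^ (1/p) *
          (∫⁻ x, (K x ^ (1/q)) ^ q ∂ρ) ^ (1/q)) ^ p :=
        ENNReal.rpow_le_rpow h hp0.le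
    _ = (∫⁻ x, K x ∂ρ) ^ (p - 1) * ∫⁻ x, K x * G x ^ p ∂ρ := by
        rw [ENNReal.mul_rpow_of_nonneg _ _ hp0.le, ← ENNReal.rpow_mul, ← ENNReal.rpow_mul,
          one_div_mul_cancel hp0.ne', ENNReal.rpow_one, hqp]
        simp_rw [heq2, heq3]
        rw [mul_comm]

private lemma hardy_aux_mass_val {C₁ c ϑ : ℝ} (hC₁ : 0 < C₁) (hc : 0 < c) (hϑ : 0 ≤ ϑ) :
    ∫⁻ u in Ici (0:ℝ), ENNReal.ofReal (C₁ * (u ^ ϑ * Real.exp (-(c * u))))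
      = ENNReal.ofReal (C₁ * ((1 / c) ^ (ϑ + 1) * Real.Gamma (ϑ + 1))) := by
  rw [← restrict_Ioi_eq_restrict_Ici]
  have hint : IntegrableOn (fun u : ℝ => C₁ * (u ^ ϑ * Real.exp (-(c * u)))) (Ioi 0) := by
    have h := integrableOn_rpow_mul_exp_neg_mul_rpow (p := 1) (s := ϑ) (b := c)
      (by linarith) zero_lt_one hc
    have h2 : IntegrableOn (fun x : ℝ => x ^ ϑ * Real.exp (-(c * x))) (Ioi 0) := by
      refine h.congr_fun (fun x hx => ?_) measurableSet_Ioi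
      beta_reduce; rw [Real.rpow_one, neg_mul]
    exact h2.const_mul C₁
  rw [← ofReal_integral_eq_lintegral_ofReal hint]
  · congr 1
    rw [integral_const_mul]
    congr 1
    have := Real.integral_rpow_mul_exp_neg_mul_Ioi (a := ϑ + 1) (r := c)
      (by linarith) hc
    simp only [add_sub_cancel_right] at this
    exact this
  · filter_upwards [self_mem_ae_restrict measurableSet_Ioi] with x hx
    have : (0:ℝ) < x := hx
    positivity

private lemma hardy_aux_mass1 (t : ℝ) (kern : ℝ → ℝ≥0∞) :
    ∫⁻ s in Ioc (1:ℝ) t, kern (t - s) ≤ ∫⁻ u in Ici (0:ℝ), kern u := by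
  have hmp : MeasurePreserving (fun s : ℝ => t - s) volume volume :=
    Measure.measurePreserving_sub_left volume t
  have hemb : MeasurableEmbedding (fun s : ℝ => t - s) :=
    (MeasurableEquiv.subLeft t).measurableEmbedding
  rw [hmp.setLIntegral_comp_emb hemb kern (Ioc 1 t), image_const_sub_Ioc]
  exact lintegral_mono_set (fun x hx => by simpa using hx.1)

private lemma hardy_aux_mass2 (s a : ℝ) (kern : ℝ → ℝ≥0∞) (hmeas : Measurable kern) :
    ∫⁻ t in Ioi a, (Ioc (1:ℝ) t).indicator (fun s' => kern (t - s')) s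
      ≤ ∫⁻ u in Ici (0:ℝ), kern u := by
  calc ∫⁻ t in Ioi a, (Ioc (1:ℝ) t).indicator (fun s' => kern (t - s')) s
      ≤ ∫⁻ t in Ioi a, (Ici s).indicator (fun t' => kern (t' - s)) t := by
        apply lintegral_mono
        intro t
        show (Ioc (1:ℝ) t).indicator (fun s' => kern (t - s')) s ≤ _
        by_cases h : s ∈ Ioc (1:ℝ) t
        · rw [indicator_of_mem h, indicator_of_mem (mem_Ici.2 h.2)]
        · rw [indicator_of_notMem h]; exact zero_le'
    _ ≤ ∫⁻ t, (Ici s).indicator (fun t' => kern (t' - s)) t := setLIntegral_le_lintegral _ _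
    _ = ∫⁻ t in Ici s, kern (t - s) := by
        rw [lintegral_indicator measurableSet_Ici]
    _ = ∫⁻ u in Ici (0:ℝ), kern u := by
        have hmp : MeasurePreserving (fun t : ℝ => t - s) volume volume :=
          measurePreserving_sub_right volume s
        have hemb : MeasurableEmbedding (fun t : ℝ => t - s) :=
          (MeasurableEquiv.subRight s).measurableEmbedding
        rw [hmp.setLIntegral_comp_emb hemb kern (Ici s), image_sub_const_Ici, sub_self]

/-- Hardy-type inequality with exponential weights, case `μ < 0`.
For `t < 1` the inner integral is interpreted as `0` (the set `Ioc 1 t` is then empty). -/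
theorem hardy_exponential_neg (p b ϑ μ₀ : ℝ) (hp : 2 ≤ p) (hϑ : 0 ≤ ϑ) (hμ₀ : 0 < μ₀) :
    ∃ C : ℝ, 0 < C ∧ ∀ μ : ℝ, μ ≤ -μ₀ → ∀ f : ℝ → ℝ, Measurable f →
      ENNReal.ofReal (|μ| ^ (p * (1 + ϑ))) *
        (∫⁻ t in Ioi (1 / 10 : ℝ),
          (ENNReal.ofReal (Real.exp (μ * t) * t ^ b) *
            ∫⁻ s in Ioc (1 : ℝ) t,
              ENNReal.ofReal (Real.exp (-μ * s) * |f s| * (t - s) ^ ϑ)) ^ p)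
        ≤ ENNReal.ofReal C *
          ∫⁻ t in Ioi (0 : ℝ), (ENNReal.ofReal (|f t| * t ^ b)) ^ p := by
  obtain ⟨C₁, hC₁, hcore⟩ := hardy_aux_core b μ₀ hμ₀
  have hΓ : 0 < Real.Gamma (ϑ + 1) := Real.Gamma_pos_of_pos (by linarith)
  refine ⟨(C₁ * Real.Gamma (ϑ + 1) * 2 ^ (ϑ + 1)) ^ p, by positivity, ?_⟩
  intro μ hμ f hf
  have hp1 : 1 < p := by linarith
  have hp0 : (0:ℝ) < p := by linarith
  have hμneg : μ < 0 := by linarith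
  have habs : |μ| = -μ := abs_of_neg hμneg
  set ν : ℝ := -μ with hν
  have hνμ₀ : μ₀ ≤ ν := by rw [hν]; linarith
  have hν0 : (0:ℝ) < ν := lt_of_lt_of_le hμ₀ hνμ₀
  have hc0 : (0:ℝ) < ν / 2 := by positivity
  set kern : ℝ → ℝ≥0∞ :=
    fun u => ENNReal.ofReal (C₁ * (u ^ ϑ * Real.exp (-(ν / 2 * u)))) with hkern
  set G : ℝ → ℝ≥0∞ := fun s => ENNReal.ofReal (|f s| * s ^ b) with hG
  set Mr : ℝ := C₁ * ((1 / (ν / 2)) ^ (ϑ + 1) * Real.Gamma (ϑ + 1)) with hMr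
  have hMr0 : 0 ≤ Mr := by positivity
  set M : ℝ≥0∞ := ENNReal.ofReal Mr with hM
  have hMne : M ≠ ⊤ := ENNReal.ofReal_ne_top
  have hmassval : ∫⁻ u in Ici (0:ℝ), kern u = M := hardy_aux_mass_val hC₁ hc0 hϑ
  have hkmeas : Measurable kern := by
    rw [hkern]
    exact (measurable_const.mul ((measurable_id'.pow_const ϑ).mul
      ((measurable_const.mul measurable_id).neg.exp))).ennreal_ofReal
  have hGmeas : Measurable G := (hf.abs.mul (measurable_id'.pow_const b)).ennreal_ofReal
  have hmass1 : ∀ t : ℝ, ∫⁻ s in Ioc (1:ℝ) t, kern (t - s) ≤ M :=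
    fun t => (hardy_aux_mass1 t kern).trans_eq hmassval
  have hmass2 : ∀ s : ℝ,
      ∫⁻ t in Ioi (1/10:ℝ), (Ioc (1:ℝ) t).indicator (fun s' => kern (t - s')) s ≤ M :=
    fun s => (hardy_aux_mass2 s _ kern hkmeas).trans_eq hmassval
  -- pointwise/inner bound
  have claim1 : ∀ t : ℝ, ENNReal.ofReal (Real.exp (μ * t) * t ^ b) *
      (∫⁻ s in Ioc (1:ℝ) t, ENNReal.ofReal (Real.exp (ν * s) * |f s| * (t - s) ^ ϑ))
      ≤ ∫⁻ s in Ioc (1:ℝ) t, kern (t - s) * G s := by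
    intro t
    rw [← lintegral_const_mul' _ _ ENNReal.ofReal_ne_top]
    refine setLIntegral_mono' measurableSet_Ioc ?_
    intro s hs
    obtain ⟨hs1, hst⟩ := hs
    have hs0 : (0:ℝ) < s := by linarith
    have ht0 : (0:ℝ) < t := by linarith
    have hu0 : 0 ≤ t - s := by linarith
    have htb : (0:ℝ) ≤ Real.exp (μ * t) * t ^ b := by positivity
    rw [hkern, hG, ← ENNReal.ofReal_mul htb, ← ENNReal.ofReal_mul (by positivity)]
    apply ENNReal.ofReal_le_ofReal
    have hcore' := hcore ν hνμ₀ s t hs1.le hst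
    calc Real.exp (μ * t) * t ^ b * (Real.exp (ν * s) * |f s| * (t - s) ^ ϑ)
        = (Real.exp (-(ν * (t - s))) * t ^ b) * (|f s| * (t - s) ^ ϑ) := by
          rw [show Real.exp (μ * t) * t ^ b * (Real.exp (ν * s) * |f s| * (t - s) ^ ϑ)
            = (Real.exp (μ * t) * Real.exp (ν * s)) * t ^ b * (|f s| * (t - s) ^ ϑ) from
            by ring, ← Real.exp_add]
          rw [hν]
          ring_nf
      _ ≤ (C₁ * Real.exp (-(ν / 2 * (t - s))) * s ^ b) * (|f s| * (t - s) ^ ϑ) :=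
          mul_le_mul_of_nonneg_right hcore' (by positivity)
      _ = C₁ * ((t - s) ^ ϑ * Real.exp (-(ν / 2 * (t - s)))) * (|f s| * s ^ b) := by ring
  -- Hölder bound per t
  have claim2 : ∀ t : ℝ, (∫⁻ s in Ioc (1:ℝ) t, kern (t - s) * G s) ^ p
      ≤ M ^ (p - 1) * ∫⁻ s in Ioc (1:ℝ) t, kern (t - s) * G s ^ p := by
    intro t
    have h := hardy_aux_holder (volume.restrict (Ioc (1:ℝ) t)) hp1
      (K := fun s => kern (t - s)) (G := G)
      ((hkmeas.comp (measurable_const.sub measurable_id)).aemeasurable)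
      hGmeas.aemeasurable
    refine h.trans (mul_le_mul_left ?_ _)
    exact ENNReal.rpow_le_rpow (hmass1 t) (by linarith)
  -- Fubini step
  have fubini : ∫⁻ t in Ioi (1/10:ℝ), ∫⁻ s in Ioc (1:ℝ) t, kern (t - s) * G s ^ p
      ≤ M * ∫⁻ s in Ioi (0:ℝ), G s ^ p := by
    have hrw : ∀ t : ℝ, ∫⁻ s in Ioc (1:ℝ) t, kern (t - s) * G s ^ p
        = ∫⁻ s, (Ioc (1:ℝ) t).indicator (fun s' => kern (t - s') * G s' ^ p) s := by
      intro t; rw [lintegral_indicator measurableSet_Ioc]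
    simp_rw [hrw]
    have hmeasprod : Measurable (Function.uncurry fun t s =>
        (Ioc (1:ℝ) t).indicator (fun s' => kern (t - s') * G s' ^ p) s) := by
      have heqf : (Function.uncurry fun t s =>
            (Ioc (1:ℝ) t).indicator (fun s' => kern (t - s') * G s' ^ p) s)
          = fun z : ℝ × ℝ => Set.indicator {z : ℝ × ℝ | 1 < z.2 ∧ z.2 ≤ z.1}
              (fun z => kern (z.1 - z.2) * G z.2 ^ p) z := by
        ext z
        rcases z with ⟨t, s⟩
        simp only [Function.uncurry]
        by_cases h : s ∈ Ioc (1:ℝ) t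
        · rw [indicator_of_mem h, indicator_of_mem (show ((t,s) : ℝ × ℝ) ∈
            {z : ℝ × ℝ | 1 < z.2 ∧ z.2 ≤ z.1} from ⟨h.1, h.2⟩)]
        · rw [indicator_of_notMem h, indicator_of_notMem (show ((t,s) : ℝ × ℝ) ∉
            {z : ℝ × ℝ | 1 < z.2 ∧ z.2 ≤ z.1} from fun hh => h ⟨hh.1, hh.2⟩)]
      rw [heqf]
      exact Measurable.indicator
        ((hkmeas.comp (measurable_fst.sub measurable_snd)).mul
          ((hGmeas.comp measurable_snd).pow_const _))
        ((measurableSet_lt measurable_const measurable_snd).inter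
          (measurableSet_le measurable_snd measurable_fst))
    rw [lintegral_lintegral_swap hmeasprod.aemeasurable]
    calc ∫⁻ s, ∫⁻ t in Ioi (1/10:ℝ),
          (Ioc (1:ℝ) t).indicator (fun s' => kern (t - s') * G s' ^ p) s ∂volume
        ≤ ∫⁻ s, (Ioi (1:ℝ)).indicator (fun s' => M * G s' ^ p) s := by
          apply lintegral_mono
          intro s
          by_cases hs : 1 < s
          · rw [indicator_of_mem (mem_Ioi.2 hs)]
            have heq : ∀ t : ℝ, (Ioc (1:ℝ) t).indicator (fun s' => kern (t - s') * G s' ^ p) s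
                = ((Ioc (1:ℝ) t).indicator (fun s' => kern (t - s')) s) * G s ^ p := by
              intro t
              by_cases h : s ∈ Ioc (1:ℝ) t
              · rw [indicator_of_mem h, indicator_of_mem h]
              · rw [indicator_of_notMem h, indicator_of_notMem h, zero_mul]
            simp_rw [heq]
            rw [lintegral_mul_const' _ _ (by
              exact ENNReal.rpow_ne_top_of_nonneg hp0.le ENNReal.ofReal_ne_top)]
            exact mul_le_mul_left (hmass2 s) _
          · have hzero : ∀ t : ℝ,
                (Ioc (1:ℝ) t).indicator (fun s' => kern (t - s') * G s' ^ p) s = 0 := by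
              intro t; exact indicator_of_notMem (fun h => hs h.1) _
            simp_rw [hzero]
            simp
      _ = M * ∫⁻ s in Ioi (1:ℝ), G s ^ p := by
          rw [lintegral_indicator measurableSet_Ioi, lintegral_const_mul' _ _ hMne]
      _ ≤ M * ∫⁻ s in Ioi (0:ℝ), G s ^ p :=
          mul_le_mul_right (lintegral_mono_set (Ioi_subset_Ioi (by norm_num))) _
  -- put everything together
  rw [habs]
  have hMp : M ^ (p - 1) * M = M ^ p := by
    nth_rewrite 2 [← ENNReal.rpow_one M]
    rw [← ENNReal.rpow_add_of_nonneg (x := M) (p - 1) 1 (by linarith) zero_le_one]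
    norm_num
  calc ENNReal.ofReal (ν ^ (p * (1 + ϑ))) *
        (∫⁻ t in Ioi (1/10:ℝ),
          (ENNReal.ofReal (Real.exp (μ * t) * t ^ b) *
            ∫⁻ s in Ioc (1:ℝ) t,
              ENNReal.ofReal (Real.exp (ν * s) * |f s| * (t - s) ^ ϑ)) ^ p)
      ≤ ENNReal.ofReal (ν ^ (p * (1 + ϑ))) *
        (∫⁻ t in Ioi (1/10:ℝ), M ^ (p - 1) * ∫⁻ s in Ioc (1:ℝ) t, kern (t - s) * G s ^ p) := by
        apply mul_le_mul_right
        apply lintegral_mono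
        intro t
        exact le_trans (ENNReal.rpow_le_rpow (claim1 t) hp0.le) (claim2 t)
    _ = ENNReal.ofReal (ν ^ (p * (1 + ϑ))) *
        (M ^ (p - 1) * ∫⁻ t in Ioi (1/10:ℝ), ∫⁻ s in Ioc (1:ℝ) t, kern (t - s) * G s ^ p) := by
        rw [lintegral_const_mul' _ _ (ENNReal.rpow_ne_top_of_nonneg (by linarith) hMne)]
    _ ≤ ENNReal.ofReal (ν ^ (p * (1 + ϑ))) *
        (M ^ (p - 1) * (M * ∫⁻ s in Ioi (0:ℝ), G s ^ p)) := by
        exact mul_le_mul_right (mul_le_mul_right fubini _) _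
    _ = (ENNReal.ofReal (ν ^ (p * (1 + ϑ))) * M ^ p) * ∫⁻ s in Ioi (0:ℝ), G s ^ p := by
        rw [← hMp]; ring
    _ ≤ ENNReal.ofReal ((C₁ * Real.Gamma (ϑ + 1) * 2 ^ (ϑ + 1)) ^ p) *
          ∫⁻ s in Ioi (0:ℝ), G s ^ p := by
        apply mul_le_mul_left
        rw [hM, ENNReal.ofReal_rpow_of_nonneg hMr0 hp0.le,
          ← ENNReal.ofReal_mul (by positivity)]
        apply ENNReal.ofReal_le_ofReal
        -- real algebra
        have h1c : 1 / (ν / 2) = 2 / ν := one_div_div ν 2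
        have hMreq : Mr = (C₁ * Real.Gamma (ϑ + 1)) * (2 / ν) ^ (ϑ + 1) := by
          rw [hMr, h1c]; ring
        have h2ν : (0:ℝ) ≤ 2 / ν := by positivity
        rw [hMreq, Real.mul_rpow (by positivity) (by positivity),
          ← Real.rpow_mul h2ν (ϑ + 1) p]
        have hexp : p * (1 + ϑ) = (ϑ + 1) * p := by ring
        rw [hexp]
        have hcomb : ν ^ ((ϑ + 1) * p) * ((C₁ * Real.Gamma (ϑ + 1)) ^ p *
            (2 / ν) ^ ((ϑ + 1) * p))
            = (C₁ * Real.Gamma (ϑ + 1)) ^ p * (ν * (2 / ν)) ^ ((ϑ + 1) * p) := by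
          rw [Real.mul_rpow hν0.le h2ν]; ring
        rw [hcomb, show ν * (2 / ν) = 2 from by field_simp]
        rw [show (2:ℝ) ^ ((ϑ + 1) * p) = ((2:ℝ) ^ (ϑ + 1)) ^ p from
          Real.rpow_mul (by norm_num) (ϑ + 1) p]
        rw [← Real.mul_rpow (by positivity) (by positivity)]
end

section
/- Let λ₀ > 0 and γ ∈ ℝ. There exists a constant C > 0, depending only on λ₀ and γ, such that for every λ ≥ λ₀ and every continuous f : ℝ → ℝ with compact support contained in (1, ∞), the function u(t) := -e^{λ t} ∫_t^∞ e^{-λ s} f(s) ds is differentiable on ℝ and satisfies u'(t) - λ u(t) = f(t) for all t ∈ ℝ, together with the weighted estimates λ² ∫_1^∞ u(t)² t^{2γ} dt ≤ C ∫_1^∞ f(t)² t^{2γ} dt and ∫_1^∞ u'(t)² t^{2γ} dt ≤ C ∫_1^∞ f(t)² t^{2γ} dt. -/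
open MeasureTheory Set
open scoped ENNReal

lemma measurable_rpow_const' (c : ℝ) : Measurable (fun t : ℝ => t ^ c) := by measurability


lemma exp_integral_Ioi {b : ℝ} (hb : 0 < b) (a : ℝ) :
    ∫ s in Ioi a, Real.exp (-b * s) = Real.exp (-b * a) / b := by
  have h : ∀ x ∈ Ici a, HasDerivAt (fun s => -Real.exp (-b * s) / b) (Real.exp (-b * x)) x := by
    intro x _
    have h1 : HasDerivAt (fun s : ℝ => -b * s) (-b) x := by
      simpa using (hasDerivAt_id x).const_mul (-b)
    have h3 := (h1.exp.div_const b).neg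
    rw [mul_neg, neg_div, neg_neg, mul_div_assoc, div_self hb.ne', mul_one] at h3
    simpa [neg_div, Pi.neg_def] using h3
  have htend : Filter.Tendsto (fun s => -Real.exp (-b * s) / b) Filter.atTop (nhds 0) := by
    have h1 : Filter.Tendsto (fun s : ℝ => b * s) Filter.atTop Filter.atTop :=
      Filter.Tendsto.const_mul_atTop hb Filter.tendsto_id
    have h2 : Filter.Tendsto (fun s : ℝ => Real.exp (-(b * s))) Filter.atTop (nhds 0) :=
      (Real.tendsto_exp_neg_atTop_nhds_zero).comp h1
    have h3 : Filter.Tendsto (fun s : ℝ => -Real.exp (-(b * s)) / b) Filter.atTop (nhds (-0/b)) :=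
      (h2.neg).div_const b
    simpa [neg_mul] using h3
  have := MeasureTheory.integral_Ioi_of_hasDerivAt_of_tendsto' h
    (exp_neg_integrableOn_Ioi a hb) htend
  rw [this]; ring

lemma cs_integral {μ : Measure ℝ} {g h : ℝ → ℝ}
    (hg2 : Integrable (fun x => g x ^ 2) μ) (hh2 : Integrable (fun x => h x ^ 2) μ)
    (hgh : Integrable (fun x => g x * h x) μ) :
    (∫ x, g x * h x ∂μ) ^ 2 ≤ (∫ x, g x ^ 2 ∂μ) * ∫ x, h x ^ 2 ∂μ := by
  have key : ∀ x : ℝ, 0 ≤ (∫ y, g y ^ 2 ∂μ) * (x * x) + (2 * ∫ y, g y * h y ∂μ) * x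
      + ∫ y, h y ^ 2 ∂μ := by
    intro x
    have expand : ∀ y, (x * g y + h y) ^ 2
        = x ^ 2 * g y ^ 2 + 2 * x * (g y * h y) + h y ^ 2 := by intro y; ring
    have hint : Integrable (fun y => x ^ 2 * g y ^ 2 + 2 * x * (g y * h y) + h y ^ 2) μ :=
      ((hg2.const_mul _).add (hgh.const_mul _)).add hh2
    have h0 : 0 ≤ ∫ y, (x * g y + h y) ^ 2 ∂μ :=
      integral_nonneg fun y => sq_nonneg _
    have heq : ∫ y, (x * g y + h y) ^ 2 ∂μ
        = x ^ 2 * (∫ y, g y ^ 2 ∂μ) + 2 * x * (∫ y, g y * h y ∂μ) + ∫ y, h y ^ 2 ∂μ := by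
      calc ∫ y, (x * g y + h y) ^ 2 ∂μ
          = ∫ y, (x ^ 2 * g y ^ 2 + 2 * x * (g y * h y)) + h y ^ 2 ∂μ := by
            simp only [expand]
        _ = (∫ y, x ^ 2 * g y ^ 2 + 2 * x * (g y * h y) ∂μ) + ∫ y, h y ^ 2 ∂μ :=
            integral_add ((hg2.const_mul _).add (hgh.const_mul _)) hh2
        _ = ((∫ y, x ^ 2 * g y ^ 2 ∂μ) + ∫ y, 2 * x * (g y * h y) ∂μ) + ∫ y, h y ^ 2 ∂μ := by
            rw [integral_add (hg2.const_mul _) (hgh.const_mul _)]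
        _ = x ^ 2 * (∫ y, g y ^ 2 ∂μ) + 2 * x * (∫ y, g y * h y ∂μ) + ∫ y, h y ^ 2 ∂μ := by
            rw [integral_const_mul, integral_const_mul]
    nlinarith [heq ▸ h0]
  have hd := discrim_le_zero key
  rw [discrim] at hd
  nlinarith [hd]

-- integrability on Ioi 1 of continuous-on-Ici-1 functions vanishing beyond T
lemma aux_int {g : ℝ → ℝ} {T : ℝ} (hg : ContinuousOn g (Ici 1))
    (hT : ∀ t, T ≤ t → g t = 0) : IntegrableOn g (Ioi 1) := by
  set T' := max T 1 with hT'
  have hsplit : Ioc 1 T' ∪ Ioi T' = Ioi 1 := Ioc_union_Ioi_eq_Ioi (le_max_right _ _)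
  have h1 : IntegrableOn g (Ioc 1 T') :=
    (hg.mono (Icc_subset_Ici_self)).integrableOn_compact isCompact_Icc |>.mono_set Ioc_subset_Icc_self
  have h2 : IntegrableOn g (Ioi T') := by
    exact integrableOn_zero.congr_fun
      (fun x hx => (hT x ((le_max_left _ _).trans (le_of_lt hx))).symm) measurableSet_Ioi
  exact hsplit ▸ h1.union h2

-- rpow comparison
lemma rpow_compare {γ t s : ℝ} (ht : 1 ≤ t) (hts : t ≤ s) :
    t ^ (2*γ) ≤ (1 + (s - t)) ^ (|2*γ| + 1) * s ^ (2*γ) := by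
  have ht0 : (0:ℝ) < t := lt_of_lt_of_le one_pos ht
  have hs0 : (0:ℝ) < s := lt_of_lt_of_le ht0 hts
  have hr0 : (0:ℝ) ≤ s - t := by linarith
  have h1r : (1:ℝ) ≤ 1 + (s - t) := by linarith
  rcases le_or_gt 0 (2*γ) with h | h
  · have e1 : t ^ (2*γ) ≤ s ^ (2*γ) := Real.rpow_le_rpow ht0.le hts h
    have e2 : (1:ℝ) ≤ (1 + (s - t)) ^ (|2*γ| + 1) := by
      calc (1:ℝ) = (1 + (s-t)) ^ (0:ℝ) := (Real.rpow_zero _).symm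
      _ ≤ _ := Real.rpow_le_rpow_of_exponent_le h1r (by positivity)
    nlinarith [Real.rpow_nonneg hs0.le (2*γ)]
  · set m := -(2*γ) with hm
    have hm0 : 0 < m := by simp [hm]; linarith
    have habs : |2*γ| = m := abs_of_neg h
    have key : s ^ m ≤ (1 + (s - t)) ^ (|2*γ| + 1) * t ^ m := by
      have hst : s ≤ (1 + (s - t)) * t := by nlinarith
      have e1 : s ^ m ≤ ((1 + (s - t)) * t) ^ m := Real.rpow_le_rpow hs0.le hst hm0.le
      rw [Real.mul_rpow (by linarith) ht0.le] at e1
      have e2 : (1 + (s-t)) ^ m ≤ (1 + (s-t)) ^ (|2*γ| + 1) :=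
        Real.rpow_le_rpow_of_exponent_le h1r (by rw [habs]; linarith)
      calc s ^ m ≤ (1 + (s-t)) ^ m * t ^ m := e1
      _ ≤ (1 + (s-t)) ^ (|2*γ| + 1) * t ^ m := by
          have := Real.rpow_nonneg ht0.le m
          nlinarith
    have e2γ : (2*γ) = -m := by rw [hm]; ring
    have htm : 0 < t ^ m := Real.rpow_pos_of_pos ht0 m
    have hsm : 0 < s ^ m := Real.rpow_pos_of_pos hs0 m
    rw [e2γ, Real.rpow_neg ht0.le, Real.rpow_neg hs0.le, ← one_div, ← one_div,
      mul_one_div, div_le_div_iff₀ htm hsm, abs_neg, abs_of_pos hm0]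
    rw [habs] at key
    linarith

-- polynomial times exponential bound
lemma poly_exp_bound {l₀ M : ℝ} (hl₀ : 0 < l₀) (hM : 0 < M) :
    ∃ K : ℝ, 0 < K ∧ ∀ r : ℝ, 0 ≤ r → (1 + r) ^ M ≤ K * Real.exp (l₀ / 2 * r) := by
  set ε := l₀ / (2 * M) with hε
  have hε0 : 0 < ε := by positivity
  refine ⟨Real.exp (M * ε - M - M * Real.log ε), Real.exp_pos _, fun r hr => ?_⟩
  have h1r : (0:ℝ) < 1 + r := by linarith
  have hlog : Real.log (1 + r) ≤ ε * (1 + r) - 1 - Real.log ε := by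
    have h2 : Real.log (ε * (1 + r)) ≤ ε * (1 + r) - 1 :=
      Real.log_le_sub_one_of_pos (by positivity)
    rw [Real.log_mul hε0.ne' h1r.ne'] at h2
    linarith
  have hrw : (1 + r) ^ M = Real.exp (M * Real.log (1 + r)) := by
    rw [Real.rpow_def_of_pos h1r]; ring_nf
  rw [hrw, ← Real.exp_add]
  apply Real.exp_le_exp.2
  have : M * Real.log (1 + r) ≤ M * (ε * (1 + r) - 1 - Real.log ε) :=
    mul_le_mul_of_nonneg_left hlog hM.le
  have hMε : M * ε = l₀ / 2 := by rw [hε]; field_simp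
  nlinarith

lemma inner_exp_bound {l s : ℝ} (hl : 0 < l) (hs : 1 < s) :
    ∫ t in Ioo 1 s, Real.exp (l/2*(t-s)) ≤ 2/l := by
  have hc : (0:ℝ) < l/2 := by linarith
  have hderiv : ∀ x ∈ uIcc (1:ℝ) s, HasDerivAt (fun t => Real.exp (l/2*(t-s)) / (l/2))
      (Real.exp (l/2*(x-s))) x := by
    intro x _
    have h1 : HasDerivAt (fun t : ℝ => l/2*(t-s)) (l/2) x := by
      simpa using ((hasDerivAt_id x).sub_const s).const_mul (l/2)
    simpa [mul_div_assoc, div_self hc.ne', mul_one] using h1.exp.div_const (l/2)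
  have hint : IntervalIntegrable (fun t => Real.exp (l/2*(t-s))) volume 1 s :=
    (Real.continuous_exp.comp (by continuity)).intervalIntegrable 1 s
  have heq := intervalIntegral.integral_eq_sub_of_hasDerivAt hderiv hint
  have h2 : ∫ t in Ioo 1 s, Real.exp (l/2*(t-s))
      = ∫ t in (1:ℝ)..s, Real.exp (l/2*(t-s)) := by
    rw [intervalIntegral.integral_of_le hs.le, ← integral_Ioc_eq_integral_Ioo]
  rw [h2, heq]
  have e1 : Real.exp (l/2*(s-s)) = 1 := by simp
  have e2 : 0 < Real.exp (l/2*(1-s)) := Real.exp_pos _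
  rw [e1]
  rw [div_sub_div_same, div_le_div_iff₀ hc (by linarith : (0:ℝ) < l)]
  have : Real.exp (l/2*(1-s)) ≥ 0 := e2.le
  nlinarith


/-- First-order ODE `u' - λ u = f` with `λ ≥ λ₀ > 0`: the solution
`u(t) = -e^{λ t} ∫_t^∞ e^{-λ s} f(s) ds` is differentiable, solves the equation,
and satisfies the weighted estimates with a constant depending only on `λ₀, γ`. -/
theorem first_order_ode_pos_eigenvalue (l₀ γ : ℝ) (hl₀ : 0 < l₀) :
    ∃ C : ℝ, 0 < C ∧ ∀ l : ℝ, l₀ ≤ l →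
      ∀ f : ℝ → ℝ, Continuous f → HasCompactSupport f → tsupport f ⊆ Ioi 1 →
      ∀ u : ℝ → ℝ,
        (∀ t : ℝ, u t = -(Real.exp (l * t) * ∫ s in Ioi t, Real.exp (-l * s) * f s)) →
        (∀ t : ℝ, HasDerivAt u (l * u t + f t) t) ∧
        l ^ 2 * (∫ t in Ioi (1 : ℝ), (u t) ^ 2 * t ^ (2 * γ))
          ≤ C * ∫ t in Ioi (1 : ℝ), (f t) ^ 2 * t ^ (2 * γ) ∧
        (∫ t in Ioi (1 : ℝ), (deriv u t) ^ 2 * t ^ (2 * γ))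
          ≤ C * ∫ t in Ioi (1 : ℝ), (f t) ^ 2 * t ^ (2 * γ) := by
  obtain ⟨K, hK, hKb⟩ := poly_exp_bound hl₀ (show (0:ℝ) < |2*γ| + 1 by positivity)
  refine ⟨4*K + 2, by positivity, ?_⟩
  intro l hl f hfc hfs hfsupp u hu
  have hl0 : 0 < l := lt_of_lt_of_le hl₀ hl
  set g : ℝ → ℝ := fun s => Real.exp (-l * s) * f s with hgdef
  have hgc : Continuous g := (Real.continuous_exp.comp (continuous_const.mul continuous_id)).mul hfc
  have hgsupp : HasCompactSupport g := hfs.mul_left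
  have hgi : Integrable g := hgc.integrable_of_hasCompactSupport hgsupp
  -- vanishing beyond T
  obtain ⟨r, hr⟩ := hfs.isBounded.subset_closedBall 0
  set T : ℝ := r + 1 with hTdef
  have hT : ∀ s, T ≤ s → f s = 0 := by
    intro s hs
    by_contra h0
    have hmem : s ∈ tsupport f := subset_tsupport f h0
    have h1 := hr hmem
    rw [Metric.mem_closedBall, Real.dist_eq, sub_zero] at h1
    have h2 := le_abs_self s
    linarith
  -- vanishing below 1
  have hf1 : ∀ s, s ≤ 1 → f s = 0 := by
    intro s hs
    by_contra h0
    have := hfsupp (subset_tsupport f h0)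
    simp only [mem_Ioi] at this
    linarith
  -- derivative
  have hFid : ∀ t : ℝ, (∫ s in Ioi t, g s) = (∫ s in Ioi 0, g s) - ∫ s in (0:ℝ)..t, g s := by
    intro t
    have i1 := intervalIntegral.integral_Iic_add_Ioi (b := t) hgi.integrableOn hgi.integrableOn
    have i2 := intervalIntegral.integral_Iic_add_Ioi (b := (0:ℝ)) hgi.integrableOn hgi.integrableOn
    have i3 := intervalIntegral.integral_Iic_sub_Iic (a := (0:ℝ)) (b := t)
      hgi.integrableOn hgi.integrableOn
    linarith
  have hu' : ∀ t : ℝ, HasDerivAt u (l * u t + f t) t := by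
    intro t
    have hueq : u = fun t => -(Real.exp (l*t) * ((∫ s in Ioi 0, g s) - ∫ s in (0:ℝ)..t, g s)) := by
      funext t; rw [hu t, hFid t]
    have hE : Real.exp (l*t) * Real.exp (-l*t) = 1 := by
      rw [← Real.exp_add]; ring_nf; exact Real.exp_zero
    have h1 : HasDerivAt (fun t : ℝ => Real.exp (l*t)) (l * Real.exp (l*t)) t := by
      simpa [mul_comm] using ((hasDerivAt_id t).const_mul l).exp
    have h2 : HasDerivAt (fun t => (∫ s in Ioi 0, g s) - ∫ s in (0:ℝ)..t, g s) (-(g t)) t :=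
      ((hgc.integral_hasStrictDerivAt 0 t).hasDerivAt).const_sub _
    have h3 := (h1.mul h2).neg
    rw [hueq]
    refine h3.congr_deriv ?_
    linear_combination (f t) * hE
  -- ===== shared setup for estimates =====
  have hWc : ContinuousOn (fun t : ℝ => t ^ (2*γ)) (Ici 1) := fun t ht =>
    (Real.continuousAt_rpow_const t _ (Or.inl (by
      have : (0:ℝ) < t := lt_of_lt_of_le one_pos ht
      exact this.ne'))).continuousWithinAt
  have hWnn : ∀ t : ℝ, 0 < t → 0 ≤ t ^ (2*γ) := fun t ht => Real.rpow_nonneg ht.le _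
  have hucont : Continuous u := by
    rw [continuous_iff_continuousAt]; exact fun t => (hu' t).continuousAt
  have huT : ∀ t, T ≤ t → u t = 0 := by
    intro t ht
    rw [hu t]
    have hz : ∫ s in Ioi t, Real.exp (-l * s) * f s = 0 := by
      rw [setIntegral_congr_fun measurableSet_Ioi
        (fun s hs => show Real.exp (-l * s) * f s = (fun _ => (0:ℝ)) s from by
          rw [hT s (le_of_lt (lt_of_le_of_lt ht hs))]; ring), integral_zero]
    rw [hz, mul_zero, neg_zero]
  have hfw : IntegrableOn (fun t => f t ^ 2 * t ^ (2*γ)) (Ioi 1) :=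
    aux_int (((hfc.pow 2).continuousOn).mul hWc) (fun t ht => by rw [hT t ht]; ring)
  have huw : IntegrableOn (fun t => u t ^ 2 * t ^ (2*γ)) (Ioi 1) :=
    aux_int (((hucont.pow 2).continuousOn).mul hWc) (fun t ht => by rw [huT t ht]; ring)
  have hfw_nonneg : 0 ≤ ∫ t in Ioi (1:ℝ), f t ^ 2 * t ^ (2*γ) :=
    setIntegral_nonneg measurableSet_Ioi
      (fun t ht => mul_nonneg (sq_nonneg _) (hWnn t (lt_trans one_pos ht)))
  set q : ℝ → ℝ := fun s => Real.exp (-l*s) * f s ^ 2 with hqdef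
  have hqc : Continuous q := (Real.continuous_exp.comp (continuous_const.mul continuous_id)).mul (hfc.pow 2)
  have hqsupp : HasCompactSupport q :=
    HasCompactSupport.intro hfs (fun x hx => by
      simp only [hqdef]; rw [image_eq_zero_of_notMem_tsupport hx]; ring)
  have hqi : Integrable q := hqc.integrable_of_hasCompactSupport hqsupp
  have hqnn : ∀ s, 0 ≤ q s := fun s => mul_nonneg (Real.exp_pos _).le (sq_nonneg _)
  set Q : ℝ → ℝ := fun t => ∫ s in Ioi t, q s with hQdef
  -- ===== Cauchy-Schwarz =====
  have hCS : ∀ t : ℝ, (∫ s in Ioi t, g s) ^ 2 ≤ Real.exp (-l*t)/l * Q t := by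
    intro t
    have e2 : (fun s : ℝ => Real.exp (-(l/2)*s) ^ 2) = fun s => Real.exp (-l*s) := by
      funext s; rw [sq, ← Real.exp_add]; congr 1; ring
    have hg2 : Integrable (fun s => Real.exp (-(l/2)*s) ^ 2) (volume.restrict (Ioi t)) := by
      rw [e2]; exact exp_neg_integrableOn_Ioi t hl0
    have eh : (fun s : ℝ => (Real.exp (-(l/2)*s) * f s) ^ 2) = q := by
      funext s; simp only [hqdef]; rw [mul_pow, sq, ← Real.exp_add]
      congr 2; ring
    have hh2 : Integrable (fun s => (Real.exp (-(l/2)*s) * f s) ^ 2) (volume.restrict (Ioi t)) := by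
      rw [eh]; exact hqi.restrict
    have egh : (fun s : ℝ => Real.exp (-(l/2)*s) * (Real.exp (-(l/2)*s) * f s)) = g := by
      funext s; simp only [hgdef]; rw [← mul_assoc, ← Real.exp_add]
      congr 2; ring
    have hgh : Integrable (fun s => Real.exp (-(l/2)*s) * (Real.exp (-(l/2)*s) * f s))
        (volume.restrict (Ioi t)) := by
      rw [egh]; exact hgi.restrict
    have hcs := cs_integral hg2 hh2 hgh
    rw [egh, e2, eh] at hcs
    rwa [exp_integral_Ioi hl0 t] at hcs
  -- ===== pointwise bound =====
  have hA : ∀ t, t ∈ Ioi (1:ℝ) → l^2 * (u t ^ 2 * t ^ (2*γ))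
      ≤ l * Real.exp (l*t) * t ^ (2*γ) * Q t := by
    intro t ht
    have ht0 : (0:ℝ) < t := lt_trans one_pos ht
    have hw := hWnn t ht0
    have hE : Real.exp (l*t) * Real.exp (-l*t) = 1 := by
      rw [← Real.exp_add]; ring_nf; exact Real.exp_zero
    have key := mul_le_mul_of_nonneg_left (hCS t)
      (show (0:ℝ) ≤ l^2 * Real.exp (l*t)^2 * t ^ (2*γ) by
        apply mul_nonneg (by positivity) hw)
    calc l^2 * (u t ^ 2 * t ^ (2*γ))
        = l^2 * Real.exp (l*t)^2 * t ^ (2*γ) * (∫ s in Ioi t, g s)^2 := by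
          rw [hu t]; simp only [hgdef]; ring
      _ ≤ l^2 * Real.exp (l*t)^2 * t ^ (2*γ) * (Real.exp (-l*t)/l * Q t) := key
      _ = l * Real.exp (l*t) * t ^ (2*γ) * Q t * (Real.exp (l*t) * Real.exp (-l*t)) := by
          field_simp
      _ = l * Real.exp (l*t) * t ^ (2*γ) * Q t := by rw [hE, mul_one]
  -- ===== lintegral quantities =====
  set Lu := ∫⁻ t in Ioi (1:ℝ), ENNReal.ofReal (u t ^ 2 * t ^ (2*γ)) with hLudef
  set Lf := ∫⁻ s in Ioi (1:ℝ), ENNReal.ofReal (f s ^ 2 * s ^ (2*γ)) with hLfdef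
  have hLf_top : Lf ≠ ⊤ := hfw.lintegral_lt_top.ne
  have hIu : ∫ t in Ioi (1:ℝ), u t ^ 2 * t ^ (2*γ) = Lu.toReal := by
    rw [integral_eq_lintegral_of_nonneg_ae
      ((ae_restrict_iff' measurableSet_Ioi).2 (ae_of_all _ fun t ht =>
        mul_nonneg (sq_nonneg _) (hWnn t (lt_trans one_pos ht))))
      huw.aestronglyMeasurable]
  have hIf : ∫ t in Ioi (1:ℝ), f t ^ 2 * t ^ (2*γ) = Lf.toReal := by
    rw [integral_eq_lintegral_of_nonneg_ae
      ((ae_restrict_iff' measurableSet_Ioi).2 (ae_of_all _ fun t ht =>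
        mul_nonneg (sq_nonneg _) (hWnn t (lt_trans one_pos ht))))
      hfw.aestronglyMeasurable]
  -- kernel integrability
  have hkeq : ∀ t : ℝ, (fun s => l * t ^ (2*γ) * Real.exp (l*(t-s)) * f s ^ 2)
      = fun s => (l * t ^ (2*γ) * Real.exp (l*t)) * q s := by
    intro t; funext s; simp only [hqdef]
    have : l*(t-s) = l*t + -l*s := by ring
    rw [this, Real.exp_add]; ring
  have hki : ∀ t : ℝ, Integrable (fun s => l * t ^ (2*γ) * Real.exp (l*(t-s)) * f s ^ 2)
      (volume.restrict (Ioi t)) := by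
    intro t; rw [hkeq t]; exact hqi.restrict.const_mul _
  -- step 1
  have step1 : ENNReal.ofReal (l^2) * Lu
      = ∫⁻ t in Ioi (1:ℝ), ENNReal.ofReal (l^2 * (u t ^ 2 * t ^ (2*γ))) := by
    rw [hLudef, ← lintegral_const_mul' _ _ ENNReal.ofReal_ne_top]
    exact (setLIntegral_congr_fun measurableSet_Ioi (fun t ht =>
      (ENNReal.ofReal_mul (by positivity)))).symm
  have step2 : ∫⁻ t in Ioi (1:ℝ), ENNReal.ofReal (l^2 * (u t ^ 2 * t ^ (2*γ)))
      ≤ ∫⁻ t in Ioi (1:ℝ), ENNReal.ofReal (l * Real.exp (l*t) * t ^ (2*γ) * Q t) :=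
    lintegral_mono_ae ((ae_restrict_iff' measurableSet_Ioi).2 (ae_of_all _ fun t ht =>
      ENNReal.ofReal_le_ofReal (hA t ht)))
  have step3 : ∫⁻ t in Ioi (1:ℝ), ENNReal.ofReal (l * Real.exp (l*t) * t ^ (2*γ) * Q t)
      = ∫⁻ t in Ioi (1:ℝ), ∫⁻ s in Ioi t,
          ENNReal.ofReal (l * t ^ (2*γ) * Real.exp (l*(t-s)) * f s ^ 2) := by
    refine setLIntegral_congr_fun measurableSet_Ioi (fun t ht => ?_)
    have hw := hWnn t (lt_trans one_pos ht)
    have hreal : l * Real.exp (l*t) * t ^ (2*γ) * Q t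
        = ∫ s in Ioi t, l * t ^ (2*γ) * Real.exp (l*(t-s)) * f s ^ 2 := by
      rw [hkeq t, integral_const_mul, hQdef]; ring
    rw [hreal, ofReal_integral_eq_lintegral_ofReal (hki t)
      (ae_of_all _ fun s => by
        have := hqnn s
        have h1 : (0:ℝ) ≤ Real.exp (l*(t-s)) := (Real.exp_pos _).le
        have h2 := sq_nonneg (f s)
        positivity)]
  -- Tonelli
  set F : ℝ → ℝ → ℝ≥0∞ := fun t s => if 1 < t ∧ t < s then
    ENNReal.ofReal (l * t ^ (2*γ) * Real.exp (l*(t-s)) * f s ^ 2) else 0 with hFdef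
  have step4 : ∫⁻ t in Ioi (1:ℝ), ∫⁻ s in Ioi t,
      ENNReal.ofReal (l * t ^ (2*γ) * Real.exp (l*(t-s)) * f s ^ 2)
      = ∫⁻ t, ∫⁻ s, F t s := by
    rw [← lintegral_indicator measurableSet_Ioi]
    refine lintegral_congr fun t => ?_
    by_cases ht : (1:ℝ) < t
    · rw [indicator_of_mem (show t ∈ Ioi 1 from ht)]
      rw [← lintegral_indicator measurableSet_Ioi]
      refine lintegral_congr fun s => ?_
      by_cases hts : t < s
      · rw [indicator_of_mem (show s ∈ Ioi t from hts)]
        simp only [hFdef]; rw [if_pos ⟨ht, hts⟩]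
      · rw [indicator_of_notMem (by simpa using hts)]
        simp only [hFdef]; rw [if_neg (fun hc => hts hc.2)]
    · rw [indicator_of_notMem (by simpa using ht)]
      have : ∀ s, F t s = 0 := fun s => by
        simp only [hFdef]; rw [if_neg (fun hc => ht hc.1)]
      simp only [this, lintegral_zero]
  have hFmeas : AEMeasurable (Function.uncurry F) (volume.prod volume) := by
    apply Measurable.aemeasurable
    have hS : MeasurableSet {p : ℝ × ℝ | 1 < p.1 ∧ p.1 < p.2} :=
      (measurableSet_lt measurable_const measurable_fst).inter
        (measurableSet_lt measurable_fst measurable_snd)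
    have hbase : Measurable fun p : ℝ × ℝ =>
        ENNReal.ofReal (l * p.1 ^ (2*γ) * Real.exp (l*(p.1-p.2)) * f p.2 ^ 2) := by
      apply Measurable.ennreal_ofReal
      have m1 : Measurable fun p : ℝ × ℝ => p.1 ^ (2*γ) :=
        (measurable_rpow_const' (2*γ)).comp measurable_fst
      have m2 : Continuous fun p : ℝ × ℝ => Real.exp (l*(p.1-p.2)) :=
        Real.continuous_exp.comp (continuous_const.mul (continuous_fst.sub continuous_snd))
      have m3 : Continuous fun p : ℝ × ℝ => f p.2 ^ 2 := (hfc.comp continuous_snd).pow 2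
      exact ((measurable_const.mul m1).mul m2.measurable).mul m3.measurable
    exact Measurable.ite hS hbase measurable_const
  have step5 : ∫⁻ t, ∫⁻ s, F t s = ∫⁻ s, ∫⁻ t, F t s := lintegral_lintegral_swap hFmeas
  -- inner bound
  have step6 : ∀ s : ℝ, (∫⁻ t, F t s) ≤ ENNReal.ofReal (2*K * (f s ^ 2 * s ^ (2*γ))) := by
    intro s
    by_cases hs : (1:ℝ) < s
    · have hs0 : (0:ℝ) < s := lt_trans one_pos hs
      have hwn : 0 ≤ s ^ (2*γ) := Real.rpow_nonneg hs0.le _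
      have hcnn : (0:ℝ) ≤ l * K * (s ^ (2*γ) * f s ^ 2) := by
        have := sq_nonneg (f s); positivity
      have e1 : ∫⁻ t, F t s = ∫⁻ t in Ioo 1 s,
          ENNReal.ofReal (l * t ^ (2*γ) * Real.exp (l*(t-s)) * f s ^ 2) := by
        rw [← lintegral_indicator measurableSet_Ioo]
        refine lintegral_congr fun t => ?_
        by_cases h : t ∈ Ioo 1 s
        · rw [indicator_of_mem h]; simp only [hFdef]; rw [if_pos ⟨h.1, h.2⟩]
        · rw [indicator_of_notMem h]; simp only [hFdef]
          rw [if_neg (fun hc => h ⟨hc.1, hc.2⟩)]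
      have e2 : ∫⁻ t in Ioo 1 s, ENNReal.ofReal (l * t ^ (2*γ) * Real.exp (l*(t-s)) * f s ^ 2)
          ≤ ∫⁻ t in Ioo 1 s, ENNReal.ofReal ((l * K * (s ^ (2*γ) * f s ^ 2))
              * Real.exp (l/2*(t-s))) := by
        refine lintegral_mono_ae ((ae_restrict_iff' measurableSet_Ioo).2
          (ae_of_all _ fun t ht => ENNReal.ofReal_le_ofReal ?_))
        have hst : (0:ℝ) ≤ s - t := by linarith [ht.2]
        have h1 : t ^ (2*γ) ≤ (1 + (s - t)) ^ (|2*γ|+1) * s ^ (2*γ) :=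
          rpow_compare ht.1.le ht.2.le
        have h2 : (1 + (s-t)) ^ (|2*γ|+1) ≤ K * Real.exp (l₀/2*(s-t)) := hKb _ hst
        have h3 : Real.exp (l₀/2*(s-t)) ≤ Real.exp (l/2*(s-t)) :=
          Real.exp_le_exp.2 (by nlinarith)
        have h4 : t ^ (2*γ) ≤ K * Real.exp (l/2*(s-t)) * s ^ (2*γ) := by
          have h2' := mul_le_mul_of_nonneg_right h2 hwn
          have h3' := mul_le_mul_of_nonneg_right
            (mul_le_mul_of_nonneg_left h3 hK.le) hwn
          nlinarith
        have h5 : Real.exp (l*(t-s)) * Real.exp (l/2*(s-t)) = Real.exp (l/2*(t-s)) := by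
          rw [← Real.exp_add]; congr 1; ring
        calc l * t ^ (2*γ) * Real.exp (l*(t-s)) * f s ^ 2
            ≤ l * (K * Real.exp (l/2*(s-t)) * s ^ (2*γ)) * Real.exp (l*(t-s)) * f s ^ 2 := by
              have hep : (0:ℝ) < Real.exp (l*(t-s)) := Real.exp_pos _
              have hfs2 := sq_nonneg (f s)
              have hm := mul_le_mul_of_nonneg_right
                (mul_le_mul_of_nonneg_left h4 hl0.le) (mul_nonneg hep.le hfs2)
              nlinarith [hm]
          _ = (l * K * (s ^ (2*γ) * f s ^ 2)) * (Real.exp (l*(t-s)) * Real.exp (l/2*(s-t))) := by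
              ring
          _ = (l * K * (s ^ (2*γ) * f s ^ 2)) * Real.exp (l/2*(t-s)) := by rw [h5]
      have e3 : ∫⁻ t in Ioo 1 s, ENNReal.ofReal ((l * K * (s ^ (2*γ) * f s ^ 2))
            * Real.exp (l/2*(t-s)))
          = ENNReal.ofReal (l * K * (s ^ (2*γ) * f s ^ 2))
            * ∫⁻ t in Ioo 1 s, ENNReal.ofReal (Real.exp (l/2*(t-s))) := by
        rw [← lintegral_const_mul' _ _ ENNReal.ofReal_ne_top]
        exact setLIntegral_congr_fun measurableSet_Ioo (fun t ht =>
          (ENNReal.ofReal_mul hcnn))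
      have e4 : ∫⁻ t in Ioo 1 s, ENNReal.ofReal (Real.exp (l/2*(t-s)))
          = ENNReal.ofReal (∫ t in Ioo 1 s, Real.exp (l/2*(t-s))) := by
        have hint : IntegrableOn (fun t => Real.exp (l/2*(t-s))) (Ioo 1 s) :=
          (((Real.continuous_exp.comp (continuous_const.mul
            (continuous_id.sub continuous_const))).integrableOn_Ioc).mono_set
            Ioo_subset_Ioc_self)
        rw [ofReal_integral_eq_lintegral_ofReal hint
          (ae_of_all _ fun t => (Real.exp_pos _).le)]
      have e5 : ∫ t in Ioo 1 s, Real.exp (l/2*(t-s)) ≤ 2/l := inner_exp_bound hl0 hs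
      calc ∫⁻ t, F t s
          ≤ ENNReal.ofReal (l * K * (s ^ (2*γ) * f s ^ 2))
            * ENNReal.ofReal (∫ t in Ioo 1 s, Real.exp (l/2*(t-s))) := by
            rw [e1]; rw [e3, e4] at e2; exact e2
        _ ≤ ENNReal.ofReal (l * K * (s ^ (2*γ) * f s ^ 2)) * ENNReal.ofReal (2/l) :=
            mul_le_mul_right (ENNReal.ofReal_le_ofReal e5) _
        _ = ENNReal.ofReal ((l * K * (s ^ (2*γ) * f s ^ 2)) * (2/l)) :=
            (ENNReal.ofReal_mul hcnn).symm
        _ = ENNReal.ofReal (2*K * (f s ^ 2 * s ^ (2*γ))) := by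
            congr 1; field_simp
    · have hz : ∀ t, F t s = 0 := fun t => by
        simp only [hFdef]; rw [if_neg (fun hc => hs (lt_trans hc.1 hc.2))]
      simp only [hz, lintegral_zero]; exact bot_le
  have step7 : ∫⁻ s, ∫⁻ t, F t s ≤ ∫⁻ s, ENNReal.ofReal (2*K * (f s ^ 2 * s ^ (2*γ))) :=
    lintegral_mono step6
  have step8 : ∫⁻ s, ENNReal.ofReal (2*K * (f s ^ 2 * s ^ (2*γ)))
      = ENNReal.ofReal (2*K) * Lf := by
    have hzero : ∀ s : ℝ, s ∉ Ioi (1:ℝ) → ENNReal.ofReal (2*K * (f s ^ 2 * s ^ (2*γ))) = 0 := by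
      intro s hs
      rw [hf1 s (by simpa using hs)]
      norm_num
    calc ∫⁻ s, ENNReal.ofReal (2*K * (f s ^ 2 * s ^ (2*γ)))
        = ∫⁻ s, (Ioi (1:ℝ)).indicator (fun s => ENNReal.ofReal (2*K * (f s ^ 2 * s ^ (2*γ)))) s := by
          refine lintegral_congr fun s => ?_
          by_cases h : s ∈ Ioi (1:ℝ)
          · rw [indicator_of_mem h]
          · rw [indicator_of_notMem h, hzero s h]
      _ = ∫⁻ s in Ioi (1:ℝ), ENNReal.ofReal (2*K * (f s ^ 2 * s ^ (2*γ))) :=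
          lintegral_indicator measurableSet_Ioi _
      _ = ENNReal.ofReal (2*K) * Lf := by
          rw [hLfdef, ← lintegral_const_mul' _ _ ENNReal.ofReal_ne_top]
          exact setLIntegral_congr_fun measurableSet_Ioi (fun s hs =>
            (ENNReal.ofReal_mul (by positivity)))
  have MAIN : ENNReal.ofReal (l^2) * Lu ≤ ENNReal.ofReal (2*K) * Lf := by
    calc ENNReal.ofReal (l^2) * Lu
        = ∫⁻ t in Ioi (1:ℝ), ENNReal.ofReal (l^2 * (u t ^ 2 * t ^ (2*γ))) := step1
      _ ≤ ∫⁻ t in Ioi (1:ℝ), ENNReal.ofReal (l * Real.exp (l*t) * t ^ (2*γ) * Q t) := step2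
      _ = ∫⁻ t in Ioi (1:ℝ), ∫⁻ s in Ioi t,
          ENNReal.ofReal (l * t ^ (2*γ) * Real.exp (l*(t-s)) * f s ^ 2) := step3
      _ = ∫⁻ t, ∫⁻ s, F t s := step4
      _ = ∫⁻ s, ∫⁻ t, F t s := step5
      _ ≤ ∫⁻ s, ENNReal.ofReal (2*K * (f s ^ 2 * s ^ (2*γ))) := step7
      _ = ENNReal.ofReal (2*K) * Lf := step8
  have EST1 : l^2 * (∫ t in Ioi (1:ℝ), u t ^ 2 * t ^ (2*γ))
      ≤ 2*K * ∫ t in Ioi (1:ℝ), f t ^ 2 * t ^ (2*γ) := by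
    rw [hIu, hIf]
    have h1 : l^2 * Lu.toReal = (ENNReal.ofReal (l^2) * Lu).toReal := by
      rw [ENNReal.toReal_mul, ENNReal.toReal_ofReal (by positivity)]
    have h2 : 2*K * Lf.toReal = (ENNReal.ofReal (2*K) * Lf).toReal := by
      rw [ENNReal.toReal_mul, ENNReal.toReal_ofReal (by positivity)]
    rw [h1, h2]
    exact ENNReal.toReal_mono (ENNReal.mul_ne_top ENNReal.ofReal_ne_top hLf_top) MAIN
  refine ⟨hu', ?_, ?_⟩
  · -- first estimate
    have h := EST1
    nlinarith [hfw_nonneg, hK]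
  · -- second estimate
    have hdeq : deriv u = fun t => l * u t + f t := funext fun t => (hu' t).deriv
    have hdc : Continuous (deriv u) := by rw [hdeq]; exact (continuous_const.mul hucont).add hfc
    have hderW : IntegrableOn (fun t => (deriv u t) ^ 2 * t ^ (2*γ)) (Ioi 1) :=
      aux_int ((hdc.pow 2).continuousOn.mul hWc) (fun t ht => by
        rw [hdeq]; simp only
        rw [huT t ht, hT t ht]; ring)
    have hptw : ∀ t ∈ Ioi (1:ℝ), (deriv u t) ^ 2 * t ^ (2*γ)
        ≤ 2*l^2 * (u t ^ 2 * t ^ (2*γ)) + 2 * (f t ^ 2 * t ^ (2*γ)) := by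
      intro t ht
      have hw := hWnn t (lt_trans one_pos ht)
      rw [hdeq]; simp only
      have hsq : (l * u t + f t)^2 ≤ 2*l^2*(u t)^2 + 2*(f t)^2 := by
        nlinarith [sq_nonneg (l * u t - f t)]
      nlinarith [mul_le_mul_of_nonneg_right hsq hw]
    have hsum : IntegrableOn (fun t => 2*l^2 * (u t ^ 2 * t ^ (2*γ))
        + 2 * (f t ^ 2 * t ^ (2*γ))) (Ioi 1) := (huw.const_mul _).add (hfw.const_mul _)
    have h1 := setIntegral_mono_on hderW hsum measurableSet_Ioi hptw
    have h2 : ∫ t in Ioi (1:ℝ), (2*l^2 * (u t ^ 2 * t ^ (2*γ)) + 2 * (f t ^ 2 * t ^ (2*γ)))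
        = 2*l^2 * (∫ t in Ioi (1:ℝ), u t ^ 2 * t ^ (2*γ))
          + 2 * ∫ t in Ioi (1:ℝ), f t ^ 2 * t ^ (2*γ) := by
      rw [integral_add (huw.const_mul _) (hfw.const_mul _), integral_const_mul, integral_const_mul]
    rw [h2] at h1
    nlinarith [EST1, hfw_nonneg, hK]
end

section
/- Let λ₀ > 0 and γ ∈ ℝ. There exists a constant C > 0, depending only on λ₀ and γ, such that for every λ ≤ -λ₀ and every continuous f : ℝ → ℝ with compact support contained in (1, ∞), the function u(t) := e^{λ t} ∫_1^t e^{-λ s} f(s) ds is differentiable on [1, ∞) and satisfies u'(t) - λ u(t) = f(t) for all t ≥ 1, together with the weighted estimates λ² ∫_1^∞ u(t)² t^{2γ} dt ≤ C ∫_1^∞ f(t)² t^{2γ} dt and ∫_1^∞ u'(t)² t^{2γ} dt ≤ C ∫_1^∞ f(t)² t^{2γ} dt. -/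
open MeasureTheory Set Filter Topology ENNReal NNReal

lemma aux_exp_integrable {a : ℝ} (ha : a < 0) (s : ℝ) :
    IntegrableOn (fun t => Real.exp (a * (t - s))) (Ioi s) := by
  have heq : (fun t : ℝ => Real.exp (a * (t - s)))
      = fun t => Real.exp (-(-a) * t) * Real.exp (-(a * s)) := by
    funext t; rw [← Real.exp_add]; ring_nf
  rw [heq]
  exact (exp_neg_integrableOn_Ioi s (neg_pos.2 ha)).mul_const (Real.exp (-(a * s)))

lemma aux_exp_integral {a : ℝ} (ha : a < 0) (s : ℝ) :
    ∫ t in Ioi s, Real.exp (a * (t - s)) = 1 / (-a) := by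
  have hderiv : ∀ x ∈ Ici s, HasDerivAt (fun t => Real.exp (a * (t - s)) / a)
      (Real.exp (a * (x - s))) x := by
    intro x _
    have h1 : HasDerivAt (fun t : ℝ => a * (t - s)) a x := by
      simpa using ((hasDerivAt_id x).sub_const s).const_mul a
    have := (h1.exp).div_const a
    rw [mul_div_assoc, div_self ha.ne, mul_one] at this
    exact this
  have htend : Tendsto (fun t => Real.exp (a * (t - s)) / a) atTop (𝓝 0) := by
    have h0 : Tendsto (fun t : ℝ => t - s) atTop atTop := by
      simpa [sub_eq_add_neg] using tendsto_atTop_add_const_right atTop (-s) tendsto_id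
    have h1 : Tendsto (fun t : ℝ => a * (t - s)) atTop atBot :=
      (tendsto_const_mul_atBot_of_neg ha).2 h0
    have := (Real.tendsto_exp_atBot.comp h1).div_const a
    simpa using this
  have := integral_Ioi_of_hasDerivAt_of_tendsto' hderiv (aux_exp_integrable ha s) htend
  rw [this]; simp [Real.exp_zero]

lemma aux_poly_exp {l₀ : ℝ} (hl₀ : 0 < l₀) (m : ℕ) {r : ℝ} (hr : 0 ≤ r) :
    (1 + r) ^ m ≤ (2 ^ m * (1 + (m.factorial : ℝ) * (2 / l₀) ^ m)) * Real.exp (l₀ / 2 * r) := by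
  have h1 : (1 + r) ^ m ≤ 2 ^ m * (1 + r ^ m) := by
    have hmax : 1 + r ≤ 2 * max 1 r := by
      rcases le_total r 1 with h | h
      · have := le_max_left (1:ℝ) r; linarith
      · have := le_max_right (1:ℝ) r; linarith
    calc (1 + r) ^ m ≤ (2 * max 1 r) ^ m := pow_le_pow_left₀ (by positivity) hmax m
      _ = 2 ^ m * (max 1 r) ^ m := mul_pow _ _ _
      _ ≤ 2 ^ m * (1 + r ^ m) := by
          have : (max 1 r) ^ m ≤ 1 + r ^ m := by
            rcases le_total r 1 with h | h
            · rw [max_eq_left h]; rw [one_pow]; nlinarith [pow_nonneg hr m]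
            · rw [max_eq_right h]; nlinarith [pow_nonneg hr m]
          nlinarith [this, pow_nonneg (by norm_num : (0:ℝ) ≤ 2) m]
  have h2 : r ^ m ≤ (m.factorial : ℝ) * (2 / l₀) ^ m * Real.exp (l₀ / 2 * r) := by
    have key : (l₀ / 2 * r) ^ m / (m.factorial : ℝ) ≤ Real.exp (l₀ / 2 * r) :=
      Real.pow_div_factorial_le_exp (x := l₀ / 2 * r) (by positivity) m
    have hfac : (0:ℝ) < (m.factorial : ℝ) := by exact_mod_cast m.factorial_pos
    have hkey : (l₀ / 2 * r) ^ m ≤ (m.factorial : ℝ) * Real.exp (l₀ / 2 * r) := by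
      rw [div_le_iff₀ hfac] at key; linarith
    have hrm : r ^ m = (2 / l₀) ^ m * (l₀ / 2 * r) ^ m := by
      rw [← mul_pow]; congr 1; field_simp
    rw [hrm]
    calc (2 / l₀) ^ m * (l₀ / 2 * r) ^ m
        ≤ (2 / l₀) ^ m * ((m.factorial : ℝ) * Real.exp (l₀ / 2 * r)) :=
          mul_le_mul_of_nonneg_left hkey (by positivity)
      _ = (m.factorial : ℝ) * (2 / l₀) ^ m * Real.exp (l₀ / 2 * r) := by ring
  have hexp1 : (1:ℝ) ≤ Real.exp (l₀ / 2 * r) := Real.one_le_exp (by positivity)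
  have h3 : 1 + r ^ m ≤ (1 + (m.factorial : ℝ) * (2 / l₀) ^ m) * Real.exp (l₀ / 2 * r) := by
    have : (1:ℝ) * 1 ≤ 1 * Real.exp (l₀ / 2 * r) := by linarith
    calc 1 + r ^ m ≤ 1 * Real.exp (l₀ / 2 * r)
          + (m.factorial : ℝ) * (2 / l₀) ^ m * Real.exp (l₀ / 2 * r) := by
          refine add_le_add (by linarith) h2
      _ = (1 + (m.factorial : ℝ) * (2 / l₀) ^ m) * Real.exp (l₀ / 2 * r) := by ring
  calc (1 + r) ^ m ≤ 2 ^ m * (1 + r ^ m) := h1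
    _ ≤ 2 ^ m * ((1 + (m.factorial : ℝ) * (2 / l₀) ^ m) * Real.exp (l₀ / 2 * r)) :=
        mul_le_mul_of_nonneg_left h3 (by positivity)
    _ = (2 ^ m * (1 + (m.factorial : ℝ) * (2 / l₀) ^ m)) * Real.exp (l₀ / 2 * r) := by ring

lemma aux_kernel {γ l₀ : ℝ} (hl₀ : 0 < l₀) {s t : ℝ} (hs : 1 ≤ s) (hst : s ≤ t) :
    t ^ (2 * γ) ≤ (2 ^ ⌈2 * γ⌉₊ * (1 + ((⌈2 * γ⌉₊).factorial : ℝ) * (2 / l₀) ^ ⌈2 * γ⌉₊))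
      * s ^ (2 * γ) * Real.exp (l₀ / 2 * (t - s)) := by
  set m := ⌈2 * γ⌉₊ with hm
  have hs0 : (0:ℝ) < s := lt_of_lt_of_le one_pos hs
  have ht0 : (0:ℝ) < t := lt_of_lt_of_le hs0 hst
  have hr : (0:ℝ) ≤ t - s := by linarith
  have hts : t ^ (2*γ) = s ^ (2*γ) * (t / s) ^ (2*γ) := by
    rw [← Real.mul_rpow hs0.le (by positivity)]
    congr 1
    field_simp
  have hds1 : (1:ℝ) ≤ t / s := (one_le_div hs0).2 hst
  have hds2 : t / s ≤ 1 + (t - s) := by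
    rw [div_le_iff₀ hs0]
    nlinarith
  have hpow : (t / s) ^ (2*γ) ≤ (1 + (t - s)) ^ m := by
    rcases le_total (2*γ) 0 with h | h
    · calc (t / s) ^ (2*γ) ≤ 1 := Real.rpow_le_one_of_one_le_of_nonpos hds1 h
        _ ≤ (1 + (t - s)) ^ m := one_le_pow₀ (by linarith)
    · calc (t / s) ^ (2*γ) ≤ (1 + (t - s)) ^ (2*γ) :=
            Real.rpow_le_rpow (by positivity) hds2 h
        _ ≤ (1 + (t - s)) ^ (m : ℝ) :=
            Real.rpow_le_rpow_of_exponent_le (by linarith) (Nat.le_ceil _)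
        _ = (1 + (t - s)) ^ m := Real.rpow_natCast _ m
  have hw : (0:ℝ) ≤ s ^ (2*γ) := Real.rpow_nonneg hs0.le _
  calc t ^ (2*γ) = s ^ (2*γ) * (t / s) ^ (2*γ) := hts
    _ ≤ s ^ (2*γ) * ((1 + (t - s)) ^ m) := mul_le_mul_of_nonneg_left hpow hw
    _ ≤ s ^ (2*γ) * ((2 ^ m * (1 + (m.factorial : ℝ) * (2 / l₀) ^ m))
          * Real.exp (l₀ / 2 * (t - s))) :=
        mul_le_mul_of_nonneg_left (aux_poly_exp hl₀ m hr) hw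
    _ = (2 ^ m * (1 + (m.factorial : ℝ) * (2 / l₀) ^ m)) * s ^ (2*γ)
          * Real.exp (l₀ / 2 * (t - s)) := by ring

lemma aux_interval_exp {l t : ℝ} (hl : l < 0) (ht : 1 ≤ t) :
    ∫ s in (1:ℝ)..t, Real.exp (l * (t - s)) ≤ 1 / (-l) := by
  have hderiv : ∀ x ∈ uIcc (1:ℝ) t, HasDerivAt (fun s => Real.exp (l * (t - s)) / (-l))
      (Real.exp (l * (t - x))) x := by
    intro x _
    have h1 : HasDerivAt (fun s : ℝ => l * (t - s)) (-l) x := by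
      simpa using ((hasDerivAt_id x).const_sub t).const_mul l
    have := (h1.exp).div_const (-l)
    rw [mul_div_assoc, div_self (by linarith : (-l) ≠ 0), mul_one] at this
    exact this
  have hint : IntervalIntegrable (fun x => Real.exp (l * (t - x))) volume 1 t :=
    (Real.continuous_exp.comp (continuous_const.mul (continuous_const.sub continuous_id))).intervalIntegrable 1 t
  have heq := intervalIntegral.integral_eq_sub_of_hasDerivAt hderiv hint
  rw [heq]
  have h0 : Real.exp (l * (t - t)) = 1 := by simp
  have h1 : 0 < Real.exp (l * (t - 1)) := Real.exp_pos _
  have hl' : 0 < -l := by linarith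
  rw [h0]
  have h2 : 0 ≤ Real.exp (l * (t - 1)) / -l := by positivity
  linarith

example : True := trivial

lemma aux_cs {l t : ℝ} (hl : l < 0) (ht : 1 ≤ t) (f : ℝ → ℝ) (hf : Continuous f) :
    ENNReal.ofReal ((∫ s in (1:ℝ)..t, Real.exp (l * (t - s)) * f s) ^ 2)
      ≤ ENNReal.ofReal (1 / (-l)) *
        ∫⁻ s in Ioc (1:ℝ) t, ENNReal.ofReal (Real.exp (l * (t - s)) * (f s) ^ 2) := by
  set I := ∫ s in (1:ℝ)..t, Real.exp (l * (t - s)) * f s with hI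
  have hcont_e : Continuous fun s : ℝ => Real.exp (l * (t - s)) :=
    Real.continuous_exp.comp (continuous_const.mul (continuous_const.sub continuous_id))
  have hcont_e2 : Continuous fun s : ℝ => Real.exp (l * (t - s) / 2) :=
    Real.continuous_exp.comp ((continuous_const.mul (continuous_const.sub continuous_id)).div_const 2)
  -- step 1: |I| ≤ J
  set J := ∫ s in (1:ℝ)..t, Real.exp (l * (t - s)) * |f s| with hJ
  have habs : |I| ≤ J := by
    refine (intervalIntegral.abs_integral_le_integral_abs ht).trans_eq ?_
    apply intervalIntegral.integral_congr
    intro s _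
    simp only
    rw [abs_mul, abs_of_pos (Real.exp_pos _)]
  have hJ_eq : J = ∫ s in Ioc (1:ℝ) t, Real.exp (l * (t - s)) * |f s| :=
    intervalIntegral.integral_of_le ht
  have hJnn : 0 ≤ J := by
    rw [hJ_eq]
    apply setIntegral_nonneg measurableSet_Ioc
    intro s _; positivity
  -- φ, ψ
  set ν := volume.restrict (Ioc (1:ℝ) t) with hν
  set φ : ℝ → ℝ≥0∞ := fun s => ENNReal.ofReal (Real.exp (l * (t - s) / 2)) with hφ
  set ψ : ℝ → ℝ≥0∞ := fun s => ENNReal.ofReal (Real.exp (l * (t - s) / 2) * |f s|) with hψ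
  have hsplit : ∀ s : ℝ, ENNReal.ofReal (Real.exp (l * (t - s)) * |f s|) = φ s * ψ s := by
    intro s
    rw [← ENNReal.ofReal_mul (Real.exp_pos _).le]
    congr 1
    rw [← mul_assoc, ← Real.exp_add]
    ring_nf
  have hJint : IntegrableOn (fun s => Real.exp (l * (t - s)) * |f s|) (Ioc (1:ℝ) t) :=
    (hcont_e.mul hf.abs).integrableOn_Ioc
  have hJ_lint : ENNReal.ofReal J = ∫⁻ s, φ s * ψ s ∂ν := by
    rw [hJ_eq, ofReal_integral_eq_lintegral_ofReal hJint
      (Filter.Eventually.of_forall fun s => by positivity)]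
    exact lintegral_congr fun s => hsplit s
  -- Cauchy–Schwarz
  have hconj : Real.HolderConjugate 2 2 := Real.HolderConjugate.two_two
  have hφm : AEMeasurable φ ν := (hcont_e2.measurable.ennreal_ofReal).aemeasurable
  have hψm : AEMeasurable ψ ν := ((hcont_e2.mul hf.abs).measurable.ennreal_ofReal).aemeasurable
  have hCS := ENNReal.lintegral_mul_le_Lp_mul_Lq ν hconj hφm hψm
  -- identify φ^2, ψ^2
  have hexp2 : ∀ s : ℝ, Real.exp (l * (t - s) / 2) ^ (2:ℝ) = Real.exp (l * (t - s)) := by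
    intro s
    rw [show (2:ℝ) = ((2:ℕ):ℝ) by norm_num, Real.rpow_natCast, sq, ← Real.exp_add]
    ring_nf
  have hφ2 : ∀ s : ℝ, φ s ^ (2:ℝ) = ENNReal.ofReal (Real.exp (l * (t - s))) := by
    intro s
    rw [hφ, ENNReal.ofReal_rpow_of_nonneg (Real.exp_pos _).le (by norm_num : (0:ℝ) ≤ 2), hexp2]
  have hψ2 : ∀ s : ℝ, ψ s ^ (2:ℝ) = ENNReal.ofReal (Real.exp (l * (t - s)) * (f s) ^ 2) := by
    intro s
    rw [hψ, ENNReal.ofReal_rpow_of_nonneg (by positivity) (by norm_num : (0:ℝ) ≤ 2),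
      Real.mul_rpow (Real.exp_pos _).le (abs_nonneg _), hexp2,
      show (2:ℝ) = ((2:ℕ):ℝ) by norm_num, Real.rpow_natCast, sq_abs]
  -- bound A = ∫⁻ φ^2
  have hA : (∫⁻ s, φ s ^ (2:ℝ) ∂ν) ≤ ENNReal.ofReal (1 / (-l)) := by
    have : (∫⁻ s, φ s ^ (2:ℝ) ∂ν) = ENNReal.ofReal (∫ s in Ioc (1:ℝ) t, Real.exp (l * (t - s))) := by
      rw [ofReal_integral_eq_lintegral_ofReal hcont_e.integrableOn_Ioc
        (Filter.Eventually.of_forall fun s => (Real.exp_pos _).le)]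
      exact lintegral_congr fun s => hφ2 s
    rw [this]
    apply ENNReal.ofReal_le_ofReal
    rw [← intervalIntegral.integral_of_le ht]
    exact aux_interval_exp hl ht
  have hB : (∫⁻ s, ψ s ^ (2:ℝ) ∂ν)
      = ∫⁻ s in Ioc (1:ℝ) t, ENNReal.ofReal (Real.exp (l * (t - s)) * (f s) ^ 2) :=
    lintegral_congr fun s => hψ2 s
  -- combine
  have h1 : ENNReal.ofReal (I ^ 2) = ENNReal.ofReal I ^ 2 → True := fun _ => trivial
  have hIJ : ENNReal.ofReal (I ^ 2) ≤ ENNReal.ofReal J ^ 2 := by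
    rw [← ENNReal.ofReal_pow hJnn]
    apply ENNReal.ofReal_le_ofReal
    calc I ^ 2 = |I| ^ 2 := (sq_abs I).symm
      _ ≤ J ^ 2 := by nlinarith [abs_nonneg I]
  calc ENNReal.ofReal (I ^ 2) ≤ ENNReal.ofReal J ^ 2 := hIJ
    _ = (∫⁻ s, φ s * ψ s ∂ν) ^ 2 := by rw [hJ_lint]
    _ = (∫⁻ s, (φ * ψ) s ∂ν) ^ 2 := rfl
    _ ≤ ((∫⁻ s, φ s ^ (2:ℝ) ∂ν) ^ (1/(2:ℝ)) * (∫⁻ s, ψ s ^ (2:ℝ) ∂ν) ^ (1/(2:ℝ))) ^ 2 := by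
        exact pow_le_pow_left' hCS 2
    _ = (∫⁻ s, φ s ^ (2:ℝ) ∂ν) * (∫⁻ s, ψ s ^ (2:ℝ) ∂ν) := by
        rw [mul_pow, ← ENNReal.rpow_natCast ((∫⁻ s, φ s ^ (2:ℝ) ∂ν) ^ (1/(2:ℝ))) 2,
          ← ENNReal.rpow_natCast ((∫⁻ s, ψ s ^ (2:ℝ) ∂ν) ^ (1/(2:ℝ))) 2,
          ← ENNReal.rpow_mul, ← ENNReal.rpow_mul]
        norm_num
    _ ≤ ENNReal.ofReal (1 / (-l)) * (∫⁻ s, ψ s ^ (2:ℝ) ∂ν) := mul_le_mul_left hA _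
    _ = ENNReal.ofReal (1 / (-l)) *
        ∫⁻ s in Ioc (1:ℝ) t, ENNReal.ofReal (Real.exp (l * (t - s)) * (f s) ^ 2) := by rw [hB]

set_option maxHeartbeats 1000000 in
/-- First-order ODE `u' - λ u = f` with `λ ≤ -λ₀ < 0`: the solution
`u(t) = e^{λ t} ∫_1^t e^{-λ s} f(s) ds` is differentiable on `[1, ∞)`, solves the
equation there, and satisfies the weighted estimates with a constant depending only
on `λ₀, γ`. -/
theorem first_order_ode_neg_eigenvalue (l₀ γ : ℝ) (hl₀ : 0 < l₀) :
    ∃ C : ℝ, 0 < C ∧ ∀ l : ℝ, l ≤ -l₀ →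
      ∀ f : ℝ → ℝ, Continuous f → HasCompactSupport f → tsupport f ⊆ Ioi 1 →
      ∀ u : ℝ → ℝ,
        (∀ t : ℝ, u t = Real.exp (l * t) * ∫ s in (1 : ℝ)..t, Real.exp (-l * s) * f s) →
        (∀ t : ℝ, 1 ≤ t → HasDerivAt u (l * u t + f t) t) ∧
        l ^ 2 * (∫ t in Ioi (1 : ℝ), (u t) ^ 2 * t ^ (2 * γ))
          ≤ C * ∫ t in Ioi (1 : ℝ), (f t) ^ 2 * t ^ (2 * γ) ∧
        (∫ t in Ioi (1 : ℝ), (deriv u t) ^ 2 * t ^ (2 * γ))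
          ≤ C * ∫ t in Ioi (1 : ℝ), (f t) ^ 2 * t ^ (2 * γ) := by
  classical
  set m : ℕ := ⌈2 * γ⌉₊ with hm
  set D : ℝ := 2 ^ m * (1 + (m.factorial : ℝ) * (2 / l₀) ^ m) with hD
  have hD1 : 1 ≤ D := by
    have h1 : (1:ℝ) ≤ 2 ^ m := one_le_pow₀ (by norm_num)
    have h2 : (0:ℝ) ≤ (m.factorial : ℝ) * (2 / l₀) ^ m := by positivity
    nlinarith
  refine ⟨4 * D + 2, by nlinarith, ?_⟩
  intro l hl f hf hfc hfs u hu
  have hl0 : l < 0 := lt_of_le_of_lt hl (by linarith)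
  have hlne : l ≠ 0 := hl0.ne
  have hl2 : l₀ ≤ -l := by linarith
  -- the weight function
  set w : ℝ → ℝ := fun t => Real.exp (2 * γ * Real.log t) with hwdef
  have hw_meas : Measurable w := Real.measurable_exp.comp (Real.measurable_log.const_mul _)
  have hw_eq : ∀ t : ℝ, 0 < t → w t = t ^ (2 * γ) := by
    intro t ht
    rw [Real.rpow_def_of_pos ht, mul_comm (Real.log t)]
  have hw_nn : ∀ t, 0 ≤ w t := fun t => (Real.exp_pos _).le
  -- continuity of u
  have hgc : Continuous fun s : ℝ => Real.exp (-l * s) * f s :=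
    (Real.continuous_exp.comp (continuous_const.mul continuous_id)).mul hf
  have hu_cont : Continuous u := by
    have : u = fun x => Real.exp (l * x) * ∫ s in (1:ℝ)..x, Real.exp (-l * s) * f s :=
      funext hu
    rw [this]
    exact (Real.continuous_exp.comp (continuous_const.mul continuous_id)).mul
      (intervalIntegral.continuous_primitive (fun a b => hgc.intervalIntegrable a b) 1)
  -- derivative
  have hderiv : ∀ t : ℝ, HasDerivAt u (l * u t + f t) t := by
    intro t
    have hI : HasDerivAt (fun x => ∫ s in (1:ℝ)..x, Real.exp (-l * s) * f s)
        (Real.exp (-l * t) * f t) t :=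
      intervalIntegral.integral_hasDerivAt_right (hgc.intervalIntegrable _ _)
        (hgc.stronglyMeasurableAtFilter _ _) hgc.continuousAt
    have h1 : HasDerivAt (fun x : ℝ => Real.exp (l * x)) (Real.exp (l * t) * l) t := by
      exact (((hasDerivAt_id t).const_mul l).exp).congr_deriv (by simp)
    have h2 := h1.mul hI
    have hueq : u = fun x => Real.exp (l * x) * ∫ s in (1:ℝ)..x, Real.exp (-l * s) * f s :=
      funext hu
    rw [hueq]
    have hee : Real.exp (l * t) * (Real.exp (-l * t) * f t) = f t := by
      rw [← mul_assoc, ← Real.exp_add]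
      simp
    refine h2.congr_deriv ?_
    beta_reduce
    rw [hee]
    ring
  refine ⟨fun t _ => hderiv t, ?_⟩
  -- notation
  set F : ℝ → ℝ≥0∞ := fun s => ENNReal.ofReal ((f s) ^ 2 * w s) with hF
  set IF : ℝ≥0∞ := ∫⁻ s in Ioi (1:ℝ), F s with hIF
  set L : ℝ≥0∞ := ∫⁻ t in Ioi (1:ℝ), ENNReal.ofReal ((u t) ^ 2 * w t) with hL
  set g : ℝ → ℝ → ℝ :=
    fun t s => if s ≤ t then Real.exp (l * (t - s)) * (f s) ^ 2 * w t else 0 with hg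
  have hut : ∀ t : ℝ, u t = ∫ s in (1:ℝ)..t, Real.exp (l * (t - s)) * f s := by
    intro t
    rw [hu t, ← intervalIntegral.integral_const_mul]
    apply intervalIntegral.integral_congr
    intro s _
    simp only
    rw [← mul_assoc, ← Real.exp_add]
    ring_nf
  have hg_meas : Measurable (Function.uncurry fun t s => ENNReal.ofReal (g t s)) := by
    apply Measurable.ennreal_ofReal
    have c1 : Continuous fun p : ℝ × ℝ => Real.exp (l * (p.1 - p.2)) :=
      Real.continuous_exp.comp (continuous_const.mul (continuous_fst.sub continuous_snd))
    have c2 : Continuous fun p : ℝ × ℝ => (f p.2) ^ 2 := (hf.comp continuous_snd).pow 2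
    exact Measurable.ite (measurableSet_le measurable_snd measurable_fst)
      (((c1.mul c2).measurable).mul (hw_meas.comp measurable_fst)) measurable_const
  -- step: pointwise Cauchy–Schwarz bound
  have H2 : ∀ t ∈ Ioi (1:ℝ), ENNReal.ofReal ((u t) ^ 2 * w t)
      ≤ ENNReal.ofReal (1 / (-l)) * ∫⁻ s in Ioi (1:ℝ), ENNReal.ofReal (g t s) := by
    intro t ht
    have ht1 : (1:ℝ) < t := ht
    have hcs := aux_cs hl0 ht1.le f hf
    rw [← hut t] at hcs
    calc ENNReal.ofReal ((u t) ^ 2 * w t)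
        = ENNReal.ofReal ((u t) ^ 2) * ENNReal.ofReal (w t) :=
          ENNReal.ofReal_mul (sq_nonneg _)
      _ ≤ (ENNReal.ofReal (1 / (-l)) *
            ∫⁻ s in Ioc (1:ℝ) t, ENNReal.ofReal (Real.exp (l * (t - s)) * (f s) ^ 2)) *
            ENNReal.ofReal (w t) := mul_le_mul_left hcs _
      _ = ENNReal.ofReal (1 / (-l)) *
            ((∫⁻ s in Ioc (1:ℝ) t, ENNReal.ofReal (Real.exp (l * (t - s)) * (f s) ^ 2)) *
            ENNReal.ofReal (w t)) := mul_assoc _ _ _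
      _ = ENNReal.ofReal (1 / (-l)) * ∫⁻ s in Ioc (1:ℝ) t, ENNReal.ofReal (g t s) := by
          congr 1
          rw [← lintegral_mul_const' _ _ ENNReal.ofReal_ne_top]
          apply setLIntegral_congr_fun measurableSet_Ioc
          intro s hs
          dsimp only
          rw [← ENNReal.ofReal_mul (by positivity)]
          congr 1
          simp only [hg]
          rw [if_pos hs.2]
      _ ≤ ENNReal.ofReal (1 / (-l)) * ∫⁻ s in Ioi (1:ℝ), ENNReal.ofReal (g t s) :=
          mul_le_mul_right (lintegral_mono_set Ioc_subset_Ioi_self) _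
  -- step: inner integral bound
  have ha : l + l₀ / 2 < 0 := by linarith
  have H4 : ∀ s ∈ Ioi (1:ℝ), (∫⁻ t in Ioi (1:ℝ), ENNReal.ofReal (g t s))
      ≤ ENNReal.ofReal (2 * D / (-l)) * F s := by
    intro s hs
    have hs1 : (1:ℝ) < s := hs
    have hdom : ∀ t : ℝ, ENNReal.ofReal (g t s) ≤
        (Ici s).indicator (fun t => ENNReal.ofReal ((D * ((f s) ^ 2 * w s)) *
          Real.exp ((l + l₀ / 2) * (t - s)))) t := by
      intro t
      by_cases hst : s ≤ t
      · rw [indicator_of_mem (mem_Ici.2 hst)]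
        apply ENNReal.ofReal_le_ofReal
        simp only [hg]
        rw [if_pos hst]
        rw [hw_eq t (by linarith), hw_eq s (by linarith), hD]
        have hker := aux_kernel (γ := γ) (l₀ := l₀) hl₀ hs1.le hst
        calc Real.exp (l * (t - s)) * (f s) ^ 2 * t ^ (2 * γ)
            ≤ Real.exp (l * (t - s)) * (f s) ^ 2 *
              ((2 ^ m * (1 + (m.factorial : ℝ) * (2 / l₀) ^ m)) * s ^ (2 * γ) *
                Real.exp (l₀ / 2 * (t - s))) := by
              apply mul_le_mul_of_nonneg_left hker (by positivity)
          _ = ((2 ^ m * (1 + (m.factorial : ℝ) * (2 / l₀) ^ m)) * ((f s) ^ 2 * s ^ (2 * γ))) *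
              (Real.exp (l * (t - s)) * Real.exp (l₀ / 2 * (t - s))) := by ring
          _ = ((2 ^ m * (1 + (m.factorial : ℝ) * (2 / l₀) ^ m)) * ((f s) ^ 2 * s ^ (2 * γ))) *
              Real.exp ((l + l₀ / 2) * (t - s)) := by
              rw [← Real.exp_add]
              ring_nf
      · rw [indicator_of_notMem (by simpa using hst)]
        simp only [hg]
        rw [if_neg hst]
        simp
    calc (∫⁻ t in Ioi (1:ℝ), ENNReal.ofReal (g t s))
        ≤ ∫⁻ t in Ioi (1:ℝ), (Ici s).indicator (fun t => ENNReal.ofReal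
            ((D * ((f s) ^ 2 * w s)) * Real.exp ((l + l₀ / 2) * (t - s)))) t :=
          lintegral_mono fun t => hdom t
      _ = ∫⁻ t in Ici s, ENNReal.ofReal ((D * ((f s) ^ 2 * w s)) *
            Real.exp ((l + l₀ / 2) * (t - s))) := by
          rw [lintegral_indicator measurableSet_Ici, Measure.restrict_restrict measurableSet_Ici,
            inter_eq_self_of_subset_left (Ici_subset_Ioi.2 hs1)]
      _ = ∫⁻ t in Ioi s, ENNReal.ofReal ((D * ((f s) ^ 2 * w s)) *
            Real.exp ((l + l₀ / 2) * (t - s))) := setLIntegral_congr Ioi_ae_eq_Ici.symm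
      _ = ENNReal.ofReal (D * ((f s) ^ 2 * w s)) *
            ∫⁻ t in Ioi s, ENNReal.ofReal (Real.exp ((l + l₀ / 2) * (t - s))) := by
          rw [← lintegral_const_mul' _ _ ENNReal.ofReal_ne_top]
          apply lintegral_congr
          intro t
          rw [← ENNReal.ofReal_mul (by positivity)]
      _ = ENNReal.ofReal (D * ((f s) ^ 2 * w s)) * ENNReal.ofReal (1 / (-(l + l₀ / 2))) := by
          congr 1
          rw [← ofReal_integral_eq_lintegral_ofReal (aux_exp_integrable ha s)
            (Filter.Eventually.of_forall fun t => (Real.exp_pos _).le), aux_exp_integral ha s]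
      _ ≤ ENNReal.ofReal (2 * D / (-l)) * F s := by
          rw [hF]
          simp only
          rw [← ENNReal.ofReal_mul (mul_nonneg (by linarith) (by positivity)),
            ← ENNReal.ofReal_mul (div_nonneg (by linarith) (by linarith))]
          apply ENNReal.ofReal_le_ofReal
          have hainv : 1 / (-(l + l₀ / 2)) ≤ 2 / (-l) := by
            rw [div_le_div_iff₀ (by linarith) (by linarith)]
            linarith
          have hfw : (0:ℝ) ≤ (f s) ^ 2 * w s := by positivity
          calc D * ((f s) ^ 2 * w s) * (1 / (-(l + l₀ / 2)))
              ≤ D * ((f s) ^ 2 * w s) * (2 / (-l)) := by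
                apply mul_le_mul_of_nonneg_left hainv (by nlinarith)
            _ = 2 * D / (-l) * ((f s) ^ 2 * w s) := by ring
  -- step: main bound L ≤ (2D/l²) IF
  have H5 : L ≤ ENNReal.ofReal (2 * D / l ^ 2) * IF := by
    calc L ≤ ∫⁻ t in Ioi (1:ℝ), ENNReal.ofReal (1 / (-l)) *
          ∫⁻ s in Ioi (1:ℝ), ENNReal.ofReal (g t s) := setLIntegral_mono' measurableSet_Ioi H2
      _ = ENNReal.ofReal (1 / (-l)) * ∫⁻ t in Ioi (1:ℝ),
          ∫⁻ s in Ioi (1:ℝ), ENNReal.ofReal (g t s) := lintegral_const_mul' _ _ ENNReal.ofReal_ne_top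
      _ = ENNReal.ofReal (1 / (-l)) * ∫⁻ s in Ioi (1:ℝ),
          ∫⁻ t in Ioi (1:ℝ), ENNReal.ofReal (g t s) := by
          rw [lintegral_lintegral_swap hg_meas.aemeasurable]
      _ ≤ ENNReal.ofReal (1 / (-l)) * ∫⁻ s in Ioi (1:ℝ),
          ENNReal.ofReal (2 * D / (-l)) * F s := by
          exact mul_le_mul_right (setLIntegral_mono' measurableSet_Ioi H4) _
      _ = ENNReal.ofReal (1 / (-l)) * (ENNReal.ofReal (2 * D / (-l)) * IF) := by
          rw [lintegral_const_mul' _ _ ENNReal.ofReal_ne_top]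
      _ = ENNReal.ofReal (2 * D / l ^ 2) * IF := by
          rw [← mul_assoc, ← ENNReal.ofReal_mul (one_div_nonneg.2 (by linarith))]
          congr 2
          field_simp
  -- integrability of f² w
  have hfint : Integrable (fun t => (f t) ^ 2 * w t) := by
    have hK : IsCompact (tsupport f) := hfc
    have hsupp : Function.support (fun t => (f t) ^ 2 * w t) ⊆ tsupport f := by
      intro t ht
      by_contra hmem
      exact ht (by simp [image_eq_zero_of_notMem_tsupport hmem])
    rw [← integrableOn_iff_integrable_of_support_subset hsupp]
    apply ContinuousOn.integrableOn_compact hK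
    intro t ht
    have ht1 : (1:ℝ) < t := hfs ht
    have : ContinuousAt (fun t => (f t) ^ 2 * w t) t := by
      apply ContinuousAt.mul (hf.continuousAt.pow 2)
      exact Real.continuous_exp.continuousAt.comp
        ((Real.continuousAt_log (by linarith)).const_mul _)
    exact this.continuousWithinAt
  have hIF_eq : ENNReal.ofReal (∫ t in Ioi (1:ℝ), (f t) ^ 2 * w t) = IF :=
    ofReal_integral_eq_lintegral_ofReal hfint.integrableOn
      (Filter.Eventually.of_forall fun t => by positivity)
  have hIF_ne : IF ≠ ⊤ := by rw [← hIF_eq]; exact ENNReal.ofReal_ne_top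
  have hIF_toReal : IF.toReal = ∫ t in Ioi (1:ℝ), (f t) ^ 2 * w t := by
    rw [← hIF_eq, ENNReal.toReal_ofReal
      (setIntegral_nonneg measurableSet_Ioi fun t _ => by positivity)]
  have hRHS : ∫ t in Ioi (1:ℝ), (f t) ^ 2 * t ^ (2 * γ) = IF.toReal := by
    rw [hIF_toReal]
    apply setIntegral_congr_fun measurableSet_Ioi
    intro t ht
    simp only
    rw [hw_eq t (by have : (1:ℝ) < t := ht; linarith)]
  have hLHS1 : ∫ t in Ioi (1:ℝ), (u t) ^ 2 * t ^ (2 * γ) = L.toReal := by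
    have e1 : ∫ t in Ioi (1:ℝ), (u t) ^ 2 * t ^ (2 * γ)
        = ∫ t in Ioi (1:ℝ), (u t) ^ 2 * w t := by
      apply setIntegral_congr_fun measurableSet_Ioi
      intro t ht
      simp only
      rw [hw_eq t (by have : (1:ℝ) < t := ht; linarith)]
    rw [e1, hL]
    exact integral_eq_lintegral_of_nonneg_ae
      (Filter.Eventually.of_forall fun t => by positivity)
      (((hu_cont.pow 2).measurable.mul hw_meas).aestronglyMeasurable)
  have hD0 : (0:ℝ) < D := by linarith
  have hIFnn : (0:ℝ) ≤ IF.toReal := ENNReal.toReal_nonneg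
  have hH5' : L.toReal ≤ 2 * D / l ^ 2 * IF.toReal := by
    calc L.toReal ≤ (ENNReal.ofReal (2 * D / l ^ 2) * IF).toReal :=
          ENNReal.toReal_mono (ENNReal.mul_ne_top ENNReal.ofReal_ne_top hIF_ne) H5
      _ = 2 * D / l ^ 2 * IF.toReal := by
          rw [ENNReal.toReal_mul, ENNReal.toReal_ofReal (div_nonneg (by linarith) (by positivity))]
  constructor
  · rw [hLHS1, hRHS]
    have hl2pos : (0:ℝ) < l ^ 2 := by positivity
    calc l ^ 2 * L.toReal ≤ l ^ 2 * (2 * D / l ^ 2 * IF.toReal) :=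
          mul_le_mul_of_nonneg_left hH5' (by positivity)
      _ = 2 * D * IF.toReal := by field_simp
      _ ≤ (4 * D + 2) * IF.toReal := by nlinarith
  -- the derivative estimate
  · have hderiv_eq : deriv u = fun t => l * u t + f t := funext fun t => (hderiv t).deriv
    set L2 : ℝ≥0∞ := ∫⁻ t in Ioi (1:ℝ), ENNReal.ofReal ((l * u t + f t) ^ 2 * w t) with hL2
    have hLHS2 : ∫ t in Ioi (1:ℝ), (deriv u t) ^ 2 * t ^ (2 * γ) = L2.toReal := by
      rw [hderiv_eq]
      have e1 : ∫ t in Ioi (1:ℝ), (l * u t + f t) ^ 2 * t ^ (2 * γ)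
          = ∫ t in Ioi (1:ℝ), (l * u t + f t) ^ 2 * w t := by
        apply setIntegral_congr_fun measurableSet_Ioi
        intro t ht
        simp only
        rw [hw_eq t (by have : (1:ℝ) < t := ht; linarith)]
      rw [e1, hL2]
      exact integral_eq_lintegral_of_nonneg_ae
        (Filter.Eventually.of_forall fun t => by positivity)
        (((((continuous_const.mul hu_cont).add hf).pow 2).measurable.mul hw_meas).aestronglyMeasurable)
    have hpt : ∀ t : ℝ, ENNReal.ofReal ((l * u t + f t) ^ 2 * w t)
        ≤ ENNReal.ofReal (2 * l ^ 2 * ((u t) ^ 2 * w t))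
          + ENNReal.ofReal (2 * ((f t) ^ 2 * w t)) := by
      intro t
      rw [← ENNReal.ofReal_add (by positivity) (by positivity)]
      apply ENNReal.ofReal_le_ofReal
      nlinarith [sq_nonneg (l * u t - f t), hw_nn t, sq_nonneg (l * u t + f t)]
    have hL2_le : L2 ≤ ENNReal.ofReal (4 * D + 2) * IF := by
      calc L2 ≤ ∫⁻ t in Ioi (1:ℝ), (ENNReal.ofReal (2 * l ^ 2 * ((u t) ^ 2 * w t))
            + ENNReal.ofReal (2 * ((f t) ^ 2 * w t))) := lintegral_mono fun t => hpt t
        _ = (∫⁻ t in Ioi (1:ℝ), ENNReal.ofReal (2 * l ^ 2 * ((u t) ^ 2 * w t)))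
            + ∫⁻ t in Ioi (1:ℝ), ENNReal.ofReal (2 * ((f t) ^ 2 * w t)) :=
            lintegral_add_left
              ((((hu_cont.pow 2).measurable.mul hw_meas).const_mul _).ennreal_ofReal) _
        _ = ENNReal.ofReal (2 * l ^ 2) * L + ENNReal.ofReal 2 * IF := by
            congr 1
            · rw [hL, ← lintegral_const_mul' _ _ ENNReal.ofReal_ne_top]
              apply lintegral_congr
              intro t
              rw [← ENNReal.ofReal_mul (by positivity)]
            · rw [hIF, ← lintegral_const_mul' _ _ ENNReal.ofReal_ne_top]
              apply lintegral_congr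
              intro t
              rw [hF]
              simp only
              rw [← ENNReal.ofReal_mul (by norm_num)]
        _ ≤ ENNReal.ofReal (2 * l ^ 2) * (ENNReal.ofReal (2 * D / l ^ 2) * IF)
            + ENNReal.ofReal 2 * IF := add_le_add_left (mul_le_mul_right H5 _) _
        _ = (ENNReal.ofReal (2 * l ^ 2) * ENNReal.ofReal (2 * D / l ^ 2)
            + ENNReal.ofReal 2) * IF := by rw [← mul_assoc, ← add_mul]
        _ = ENNReal.ofReal (4 * D + 2) * IF := by
            rw [← ENNReal.ofReal_mul (by positivity),
              ← ENNReal.ofReal_add (mul_nonneg (by positivity)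
                (div_nonneg (by linarith) (by positivity))) (by norm_num)]
            congr 1
            field_simp
            ring
    rw [hLHS2, hRHS]
    calc L2.toReal ≤ (ENNReal.ofReal (4 * D + 2) * IF).toReal :=
          ENNReal.toReal_mono (ENNReal.mul_ne_top ENNReal.ofReal_ne_top hIF_ne) hL2_le
      _ = (4 * D + 2) * IF.toReal := by
          rw [ENNReal.toReal_mul, ENNReal.toReal_ofReal (by linarith)]
end
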